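/- arXiv:1207.5218 — 2 statements merged into one kernel-verified Lean document; each statement's English description precedes it below -/
import Mathlib

section
/- Let Q(∂u, ∂²v) = Σ Q^{αβγ} ∂_α u ∂_β ∂_γ v be a quadratic form on ℝ^{1+3} with constant coefficients satisfying the null condition Q^{αβγ} ξ_α ξ_β ξ_γ = 0 for all ξ ∈ ℝ⁴ with ξ₀² = c²(ξ₁² + ξ₂² + ξ₃²). Then there exists a constant C such that for all C² functions u, v and all (t,x) with r = |x| ≥ c t / 2, |Q^{αβγ} ∂_α u ∂_β ∂_γ v| ≤ (C/⟨r⟩) [ |Γu| |∂²v| + |∂u| |∂Γv| + |∂u| |∂v| + ⟨ct − r⟩ |∂u| |∂²v| ] at the point (t,x), where Γ ranges over the vector fields (∂, Ω, S). -/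
/-- Partial derivative `∂_α` on `ℝ^{1+3}` (coordinate `0` is time). -/
noncomputable def pd (α : Fin 4) (u : (Fin 4 → ℝ) → ℝ) : (Fin 4 → ℝ) → ℝ :=
  fun y => fderiv ℝ u y (Pi.single α 1)

/-- Rotation vector field `Ω_{ij} = xⁱ ∂_j - xʲ ∂_i`. -/
noncomputable def rotVF (i j : Fin 3) (u : (Fin 4 → ℝ) → ℝ) : (Fin 4 → ℝ) → ℝ :=
  fun y => y i.succ * pd j.succ u y - y j.succ * pd i.succ u y

/-- Scaling vector field `S = t ∂_t + r ∂_r = Σ_α x^α ∂_α`. -/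
noncomputable def scalingVF (u : (Fin 4 → ℝ) → ℝ) : (Fin 4 → ℝ) → ℝ :=
  fun y => ∑ α : Fin 4, y α * pd α u y

/-- Spatial radius `r = |x|` at a spacetime point `y = (t, x)`. -/
noncomputable def spr (y : Fin 4 → ℝ) : ℝ := Real.sqrt (∑ i : Fin 3, (y i.succ) ^ 2)

/-- Japanese bracket `⟨s⟩ = √(1+s²)`. -/
noncomputable def jb (s : ℝ) : ℝ := Real.sqrt (1 + s ^ 2)

/-- `|∂u|` : sum of the magnitudes of all first derivatives. -/
noncomputable def dAbs (u : (Fin 4 → ℝ) → ℝ) (y : Fin 4 → ℝ) : ℝ :=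
  ∑ α : Fin 4, |pd α u y|

/-- `|∂²u|` : sum of the magnitudes of all second derivatives. -/
noncomputable def d2Abs (u : (Fin 4 → ℝ) → ℝ) (y : Fin 4 → ℝ) : ℝ :=
  ∑ α : Fin 4, ∑ β : Fin 4, |pd α (pd β u) y|

/-- `|Γu|` : sum of `|Γ_a u|` over the eight fields `(∂, Ω, S)`. -/
noncomputable def gammaAbs (u : (Fin 4 → ℝ) → ℝ) (y : Fin 4 → ℝ) : ℝ :=
  (∑ α : Fin 4, |pd α u y|) +
    (∑ i : Fin 3, ∑ j : Fin 3, if i < j then |rotVF i j u y| else 0) +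
    |scalingVF u y|

/-- `|∂Γu|` : sum of `|∂_β Γ_a u|` over the eight fields and all `β`. -/
noncomputable def dGammaAbs (u : (Fin 4 → ℝ) → ℝ) (y : Fin 4 → ℝ) : ℝ :=
  (∑ β : Fin 4, ∑ α : Fin 4, |pd β (pd α u) y|) +
    (∑ β : Fin 4, ∑ i : Fin 3, ∑ j : Fin 3, if i < j then |pd β (rotVF i j u) y| else 0) +
    ∑ β : Fin 4, |pd β (scalingVF u) y|

/-! ### basic positivity and jb lemmas -/

lemma jb_pos (s : ℝ) : 0 < jb s := Real.sqrt_pos.2 (by positivity)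

lemma one_le_jb (s : ℝ) : 1 ≤ jb s := by
  rw [show (1:ℝ) = Real.sqrt 1 by simp [Real.sqrt_one]]
  exact Real.sqrt_le_sqrt (by nlinarith [sq_nonneg s])

lemma abs_le_jb (s : ℝ) : |s| ≤ jb s := by
  rw [show |s| = Real.sqrt (s^2) by rw [Real.sqrt_sq_eq_abs]]
  exact Real.sqrt_le_sqrt (by nlinarith)

lemma jb_le_sqrt2_mul (r : ℝ) (hr : 1 ≤ r) : jb r ≤ Real.sqrt 2 * r := by
  rw [show Real.sqrt 2 * r = Real.sqrt (2 * r^2) by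
    rw [Real.sqrt_mul (by norm_num), Real.sqrt_sq (by linarith)]]
  exact Real.sqrt_le_sqrt (by nlinarith)

lemma jb_le_sqrt2 (r : ℝ) (hr0 : 0 ≤ r) (hr : r ≤ 1) : jb r ≤ Real.sqrt 2 := by
  rw [jb]
  exact Real.sqrt_le_sqrt (by nlinarith)

lemma dAbs_nonneg (u y) : 0 ≤ dAbs u y := Finset.sum_nonneg fun _ _ => abs_nonneg _

lemma d2Abs_nonneg (u y) : 0 ≤ d2Abs u y :=
  Finset.sum_nonneg fun _ _ => Finset.sum_nonneg fun _ _ => abs_nonneg _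

lemma rotPart_nonneg (u y) :
    0 ≤ ∑ i : Fin 3, ∑ j : Fin 3, if i < j then |rotVF i j u y| else 0 :=
  Finset.sum_nonneg fun _ _ => Finset.sum_nonneg fun _ _ => by positivity

lemma gammaAbs_nonneg (u y) : 0 ≤ gammaAbs u y := by
  have := dAbs_nonneg u y
  have := rotPart_nonneg u y
  have := abs_nonneg (scalingVF u y)
  unfold gammaAbs dAbs at *
  linarith

lemma dGammaAbs_nonneg (u y) : 0 ≤ dGammaAbs u y := by
  unfold dGammaAbs
  have h1 : 0 ≤ ∑ β : Fin 4, ∑ α : Fin 4, |pd β (pd α u) y| := d2Abs_nonneg u y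
  have h2 : (0:ℝ) ≤ ∑ β : Fin 4, ∑ i : Fin 3, ∑ j : Fin 3,
      if i < j then |pd β (rotVF i j u) y| else 0 :=
    Finset.sum_nonneg fun _ _ => Finset.sum_nonneg fun _ _ =>
      Finset.sum_nonneg fun _ _ => by positivity
  have h3 : (0:ℝ) ≤ ∑ β : Fin 4, |pd β (scalingVF u) y| :=
    Finset.sum_nonneg fun _ _ => abs_nonneg _
  linarith

/-! ### sub-sum lemmas -/

lemma abs_scaling_le_gamma (u y) : |scalingVF u y| ≤ gammaAbs u y := by
  have := dAbs_nonneg u y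
  have := rotPart_nonneg u y
  unfold gammaAbs dAbs at *
  linarith

lemma abs_pd_le_dAbs (u y) (α : Fin 4) : |pd α u y| ≤ dAbs u y :=
  Finset.single_le_sum (f := fun β => |pd β u y|) (fun _ _ => abs_nonneg _) (Finset.mem_univ α)

lemma fin3_succ_two : (Fin.succ 2 : Fin 4) = 3 := rfl
lemma fin3_succ_one : (Fin.succ 1 : Fin 4) = 2 := rfl
lemma fin3_succ_zero : (Fin.succ 0 : Fin 4) = 1 := rfl

lemma sum_succ_le_sum (f : Fin 4 → ℝ) (hf : ∀ β, 0 ≤ f β) :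
    ∑ j : Fin 3, f j.succ ≤ ∑ β : Fin 4, f β := by
  simp only [Fin.sum_univ_three, Fin.sum_univ_four, fin3_succ_zero, fin3_succ_one, fin3_succ_two]
  have := hf 0
  linarith

lemma abs_pd2_le_d2Abs (v y) (β γ : Fin 4) : |pd β (pd γ v) y| ≤ d2Abs v y := by
  unfold d2Abs
  calc |pd β (pd γ v) y| ≤ ∑ δ : Fin 4, |pd β (pd δ v) y| :=
        Finset.single_le_sum (f := fun δ => |pd β (pd δ v) y|)
          (fun _ _ => abs_nonneg _) (Finset.mem_univ γ)
    _ ≤ ∑ α : Fin 4, ∑ δ : Fin 4, |pd α (pd δ v) y| :=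
        Finset.single_le_sum (f := fun α => ∑ δ : Fin 4, |pd α (pd δ v) y|)
          (fun _ _ => Finset.sum_nonneg fun _ _ => abs_nonneg _) (Finset.mem_univ β)

lemma rot_swap (u y) (i j : Fin 3) : rotVF j i u y = -rotVF i j u y := by
  simp only [rotVF]; ring

lemma rot_self (u y) (i : Fin 3) : rotVF i i u y = 0 := by simp [rotVF]

lemma rotsum_le_gamma (u y) (i : Fin 3) :
    ∑ j : Fin 3, |rotVF j i u y| ≤ gammaAbs u y := by
  have hd := dAbs_nonneg u y
  have hs := abs_nonneg (scalingVF u y)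
  have hRHS : ∑ p : Fin 3, ∑ q : Fin 3, (if p < q then |rotVF p q u y| else 0)
      = |rotVF 0 1 u y| + |rotVF 0 2 u y| + |rotVF 1 2 u y| := by
    simp [Fin.sum_univ_three]
  have h10 : |rotVF 1 0 u y| = |rotVF 0 1 u y| := by rw [rot_swap, abs_neg]
  have h20 : |rotVF 2 0 u y| = |rotVF 0 2 u y| := by rw [rot_swap, abs_neg]
  have h21 : |rotVF 2 1 u y| = |rotVF 1 2 u y| := by rw [rot_swap, abs_neg]
  have n01 := abs_nonneg (rotVF 0 1 u y)
  have n02 := abs_nonneg (rotVF 0 2 u y)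
  have n12 := abs_nonneg (rotVF 1 2 u y)
  have key : ∑ j : Fin 3, |rotVF j i u y|
      ≤ ∑ p : Fin 3, ∑ q : Fin 3, if p < q then |rotVF p q u y| else 0 := by
    rw [hRHS]
    fin_cases i <;>
      simp only [Fin.zero_eta, Fin.mk_one, Fin.reduceFinMk, Fin.sum_univ_three] <;>
      rw [rot_self] <;> simp only [abs_zero] <;> [(rw [h10, h20]); (rw [h21]); skip] <;> linarith
  unfold gammaAbs dAbs at *
  linarith

/-! ### pointwise decomposition identities -/

lemma decomp0 (y : Fin 4 → ℝ) (r : ℝ) (hr : r ≠ 0)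
    (hr2 : r ^ 2 = ∑ i : Fin 3, (y i.succ) ^ 2) (c : ℝ) (w : (Fin 4 → ℝ) → ℝ) :
    pd 0 w y = -c * (∑ j : Fin 3, (y j.succ / r) * pd j.succ w y)
      + (c * scalingVF w y - (c * y 0 - r) * pd 0 w y) / r := by
  simp only [scalingVF, Fin.sum_univ_succ, Fin.sum_univ_three] at *
  field_simp
  ring

lemma decompi (y : Fin 4 → ℝ) (r : ℝ) (hr : r ≠ 0)
    (hr2 : r ^ 2 = ∑ i : Fin 3, (y i.succ) ^ 2) (i : Fin 3) (w : (Fin 4 → ℝ) → ℝ) :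
    pd i.succ w y = (y i.succ / r) * (∑ j : Fin 3, (y j.succ / r) * pd j.succ w y)
      + (∑ j : Fin 3, (y j.succ / r) * rotVF j i w y) / r := by
  simp only [rotVF, Fin.sum_univ_three, fin3_succ_zero, fin3_succ_one, fin3_succ_two] at *
  fin_cases i
  · field_simp
    simp only [Fin.zero_eta, Fin.mk_one, Fin.reduceFinMk, Fin.isValue, fin3_succ_zero, fin3_succ_one, fin3_succ_two] at *
    linear_combination (pd 1 w y) * hr2
  · field_simp
    simp only [Fin.zero_eta, Fin.mk_one, Fin.reduceFinMk, Fin.isValue, fin3_succ_zero, fin3_succ_one, fin3_succ_two] at *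
    linear_combination (pd 2 w y) * hr2
  · field_simp
    have hh : (⟨2+1, by norm_num⟩ : Fin 4) = 3 := rfl
    simp only [Fin.zero_eta, Fin.mk_one, Fin.reduceFinMk, Fin.isValue, fin3_succ_zero, fin3_succ_one, fin3_succ_two] at *
    linear_combination (pd 3 w y) * hr2

lemma abs_omega_le_one (y : Fin 4 → ℝ) (r : ℝ) (hr1 : 1 ≤ r)
    (hr2 : r ^ 2 = ∑ i : Fin 3, (y i.succ) ^ 2) (j : Fin 3) : |y j.succ / r| ≤ 1 := by
  have hsq : y j.succ ^ 2 ≤ r ^ 2 := by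
    simp only [Fin.sum_univ_three] at hr2
    fin_cases j <;> simp only [Fin.zero_eta, Fin.mk_one, Fin.reduceFinMk] <;>
      nlinarith [sq_nonneg (y (Fin.succ 0)), sq_nonneg (y (Fin.succ 1)), sq_nonneg (y (Fin.succ 2))]
  have habs : |y j.succ| ≤ r := by nlinarith [abs_nonneg (y j.succ), sq_abs (y j.succ)]
  rw [abs_div, abs_of_pos (by linarith : (0:ℝ) < r)]
  rw [div_le_one (by linarith)]
  exact habs

lemma abs_sum3_le (ω X : Fin 3 → ℝ) (hω : ∀ j, |ω j| ≤ 1) :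
    |∑ j : Fin 3, ω j * X j| ≤ ∑ j : Fin 3, |X j| := by
  calc |∑ j : Fin 3, ω j * X j| ≤ ∑ j : Fin 3, |ω j * X j| := Finset.abs_sum_le_sum_abs _ _
    _ ≤ ∑ j : Fin 3, |X j| := by
        apply Finset.sum_le_sum
        intro j _
        rw [abs_mul]
        nlinarith [abs_nonneg (X j), abs_nonneg (ω j), hω j]

/-- The master decomposition bound: at a point with `r ≥ 1`, for any function `w`,
`∂_α w − ξ_α ∂_r w` is bounded by the good quantities. -/
lemma decomp_bound (c r : ℝ) (hc : 0 < c) (hr1 : 1 ≤ r)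
    (y : Fin 4 → ℝ) (hr2 : r ^ 2 = ∑ i : Fin 3, (y i.succ) ^ 2)
    (w : (Fin 4 → ℝ) → ℝ) (jq SB PB RB G : ℝ)
    (hjq : |c * y 0 - r| ≤ jq) (hSB : |scalingVF w y| ≤ SB) (hPB : |pd 0 w y| ≤ PB)
    (hRB : ∀ i : Fin 3, (∑ j : Fin 3, |rotVF j i w y|) ≤ RB)
    (hG : c * SB + jq * PB ≤ G) (hG2 : RB ≤ G) :
    ∀ α : Fin 4, |pd α w y - (Fin.cons (α := fun _ : Fin 4 => ℝ) (-c) (fun i : Fin 3 => y i.succ / r) α) *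
        (∑ j : Fin 3, (y j.succ / r) * pd j.succ w y)| ≤ G / r := by
  have hr0 : (0:ℝ) < r := by linarith
  have hrne : r ≠ 0 := ne_of_gt hr0
  have hjq0 : 0 ≤ jq := le_trans (abs_nonneg _) hjq
  intro α
  induction α using Fin.cases with
  | zero =>
      rw [Fin.cons_zero]
      have hd := decomp0 y r hrne hr2 c w
      have heq : pd 0 w y - (-c) * (∑ j : Fin 3, (y j.succ / r) * pd j.succ w y)
          = (c * scalingVF w y - (c * y 0 - r) * pd 0 w y) / r := by
        linear_combination hd
      rw [heq, abs_div, abs_of_pos hr0]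
      rw [div_le_div_iff_of_pos_right hr0]
      have h1 : |c * scalingVF w y - (c * y 0 - r) * pd 0 w y|
          ≤ c * |scalingVF w y| + |c * y 0 - r| * |pd 0 w y| := by
        calc |c * scalingVF w y - (c * y 0 - r) * pd 0 w y|
            ≤ |c * scalingVF w y| + |(c * y 0 - r) * pd 0 w y| := abs_sub _ _
          _ = c * |scalingVF w y| + |c * y 0 - r| * |pd 0 w y| := by
              rw [abs_mul, abs_mul, abs_of_pos hc]
      have h2 : c * |scalingVF w y| ≤ c * SB := mul_le_mul_of_nonneg_left hSB hc.le
      have h3 : |c * y 0 - r| * |pd 0 w y| ≤ jq * PB :=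
        mul_le_mul hjq hPB (abs_nonneg _) hjq0
      linarith
  | succ i =>
      rw [Fin.cons_succ]
      have hd := decompi y r hrne hr2 i w
      have heq : pd i.succ w y - (y i.succ / r) * (∑ j : Fin 3, (y j.succ / r) * pd j.succ w y)
          = (∑ j : Fin 3, (y j.succ / r) * rotVF j i w y) / r := by
        linear_combination hd
      rw [heq, abs_div, abs_of_pos hr0]
      rw [div_le_div_iff_of_pos_right hr0]
      have h1 : |∑ j : Fin 3, (y j.succ / r) * rotVF j i w y| ≤ ∑ j : Fin 3, |rotVF j i w y| :=
        abs_sum3_le _ _ (abs_omega_le_one y r hr1 hr2)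
      have h2 := hRB i
      linarith

/-! ### calculus lemmas -/

lemma pd_pd_eq (v : (Fin 4 → ℝ) → ℝ) (hv : ContDiff ℝ 2 v) (y : Fin 4 → ℝ) (β γ : Fin 4) :
    pd β (pd γ v) y = fderiv ℝ (fderiv ℝ v) y (Pi.single β 1) (Pi.single γ 1) := by
  have hfd : Differentiable ℝ (fderiv ℝ v) :=
    (hv.fderiv_right (m := 1) (by norm_num)).differentiable one_ne_zero
  have h : pd γ v = fun z => (ContinuousLinearMap.apply ℝ ℝ (Pi.single γ 1)) (fderiv ℝ v z) := rfl
  rw [h, pd]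
  have := ((ContinuousLinearMap.apply ℝ ℝ (Pi.single γ 1 : Fin 4 → ℝ)).hasFDerivAt.comp y
    (hfd y).hasFDerivAt).fderiv
  rw [show (fun z => (ContinuousLinearMap.apply ℝ ℝ (Pi.single γ 1 : Fin 4 → ℝ)) (fderiv ℝ v z))
      = (ContinuousLinearMap.apply ℝ ℝ (Pi.single γ 1 : Fin 4 → ℝ)) ∘ fderiv ℝ v from rfl, this]
  rfl

lemma pd_symm (v : (Fin 4 → ℝ) → ℝ) (hv : ContDiff ℝ 2 v) (y : Fin 4 → ℝ) (β γ : Fin 4) :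
    pd β (pd γ v) y = pd γ (pd β v) y := by
  rw [pd_pd_eq v hv y β γ, pd_pd_eq v hv y γ β]
  exact (hv.contDiffAt.isSymmSndFDerivAt (by norm_num)) _ _

lemma pd_differentiable (v : (Fin 4 → ℝ) → ℝ) (hv : ContDiff ℝ 2 v) (γ : Fin 4) :
    Differentiable ℝ (pd γ v) := by
  have hfd : Differentiable ℝ (fderiv ℝ v) :=
    (hv.fderiv_right (m := 1) (by norm_num)).differentiable one_ne_zero
  exact hfd.clm_apply (differentiable_const _)

lemma pd_coord_mul (f : (Fin 4 → ℝ) → ℝ) (hf : Differentiable ℝ f) (α γ : Fin 4) (y : Fin 4 → ℝ) :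
    pd γ (fun z => z α * f z) y
      = (if α = γ then 1 else 0) * f y + y α * pd γ f y := by
  have hproj : (fun z : Fin 4 → ℝ => z α)
      = (ContinuousLinearMap.proj (R := ℝ) (φ := fun _ : Fin 4 => ℝ) α) := rfl
  have hca : DifferentiableAt ℝ (fun z : Fin 4 → ℝ => z α) y := by
    rw [hproj]; exact (ContinuousLinearMap.proj (R := ℝ) (φ := fun _ : Fin 4 => ℝ) α).differentiableAt
  have h := fderiv_fun_mul (𝕜 := ℝ) hca (hf y)
  unfold pd
  rw [h]
  have h2 : fderiv ℝ (fun z : Fin 4 → ℝ => z α) y = ContinuousLinearMap.proj α := by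
    rw [hproj]; exact ContinuousLinearMap.fderiv _
  simp [h2, Pi.single_apply]
  ring

lemma pd_fun_sum3 (f : Fin 3 → (Fin 4 → ℝ) → ℝ) (hf : ∀ i, Differentiable ℝ (f i))
    (γ : Fin 4) (y : Fin 4 → ℝ) :
    pd γ (fun z => ∑ i : Fin 3, f i z) y = ∑ i : Fin 3, pd γ (f i) y := by
  unfold pd
  rw [fderiv_fun_sum (fun i _ => (hf i) y)]
  simp

lemma pd_fun_sum4 (f : Fin 4 → (Fin 4 → ℝ) → ℝ) (hf : ∀ i, Differentiable ℝ (f i))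
    (γ : Fin 4) (y : Fin 4 → ℝ) :
    pd γ (fun z => ∑ i : Fin 4, f i z) y = ∑ i : Fin 4, pd γ (f i) y := by
  unfold pd
  rw [fderiv_fun_sum (fun i _ => (hf i) y)]
  simp

lemma pd_const_mul (f : (Fin 4 → ℝ) → ℝ) (hf : Differentiable ℝ f) (a : ℝ) (γ : Fin 4)
    (y : Fin 4 → ℝ) : pd γ (fun z => a * f z) y = a * pd γ f y := by
  unfold pd
  rw [fderiv_const_mul (hf y) a]
  simp

lemma pd_sub (f g : (Fin 4 → ℝ) → ℝ) (hf : Differentiable ℝ f) (hg : Differentiable ℝ g)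
    (γ : Fin 4) (y : Fin 4 → ℝ) :
    pd γ (fun z => f z - g z) y = pd γ f y - pd γ g y := by
  unfold pd
  rw [fderiv_fun_sub (hf y) (hg y)]
  simp

lemma pd_scaling (v : (Fin 4 → ℝ) → ℝ) (hv : ContDiff ℝ 2 v) (γ : Fin 4) (y : Fin 4 → ℝ) :
    pd γ (scalingVF v) y = pd γ v y + ∑ α : Fin 4, y α * pd γ (pd α v) y := by
  have h1 : ∀ α : Fin 4, Differentiable ℝ (fun z => z α * pd α v z) := by
    intro α
    have hproj : (fun z : Fin 4 → ℝ => z α)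
        = (ContinuousLinearMap.proj (R := ℝ) (φ := fun _ : Fin 4 => ℝ) α) := rfl
    apply Differentiable.mul _ (pd_differentiable v hv α)
    rw [hproj]; exact (ContinuousLinearMap.proj (R := ℝ) (φ := fun _ : Fin 4 => ℝ) α).differentiable
  have h0 : scalingVF v = fun z => ∑ α : Fin 4, (fun w => w α * pd α v w) z := rfl
  have hsum : pd γ (scalingVF v) y = ∑ α : Fin 4, pd γ (fun z => z α * pd α v z) y := by
    rw [h0, pd_fun_sum4 _ h1]
  rw [hsum]
  have h2 : ∀ α : Fin 4, pd γ (fun z => z α * pd α v z) y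
      = (if α = γ then 1 else 0) * pd α v y + y α * pd γ (pd α v) y :=
    fun α => pd_coord_mul _ (pd_differentiable v hv α) α γ y
  rw [Finset.sum_congr rfl (fun α _ => h2 α), Finset.sum_add_distrib]
  congr 1
  simp [Finset.sum_ite_eq' Finset.univ γ]

lemma pd_rot (v : (Fin 4 → ℝ) → ℝ) (hv : ContDiff ℝ 2 v) (i j : Fin 3) (γ : Fin 4)
    (y : Fin 4 → ℝ) :
    pd γ (rotVF i j v) y
      = ((if i.succ = γ then 1 else 0) * pd j.succ v y
          - (if j.succ = γ then 1 else 0) * pd i.succ v y)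
        + (y i.succ * pd γ (pd j.succ v) y - y j.succ * pd γ (pd i.succ v) y) := by
  have hm : ∀ (a b : Fin 4), Differentiable ℝ (fun z => z a * pd b v z) := by
    intro a b
    have hproj : (fun z : Fin 4 → ℝ => z a)
        = (ContinuousLinearMap.proj (R := ℝ) (φ := fun _ : Fin 4 => ℝ) a) := rfl
    apply Differentiable.mul _ (pd_differentiable v hv b)
    rw [hproj]; exact (ContinuousLinearMap.proj (R := ℝ) (φ := fun _ : Fin 4 => ℝ) a).differentiable
  have h0 : rotVF i j v = fun z => (fun w => w i.succ * pd j.succ v w) z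
      - (fun w => w j.succ * pd i.succ v w) z := rfl
  rw [h0, pd_sub _ _ (hm _ _) (hm _ _),
    pd_coord_mul _ (pd_differentiable v hv j.succ) i.succ γ y,
    pd_coord_mul _ (pd_differentiable v hv i.succ) j.succ γ y]
  ring

lemma pd_rot_swap (v : (Fin 4 → ℝ) → ℝ) (β : Fin 4) (y : Fin 4 → ℝ) (i j : Fin 3) :
    pd β (rotVF j i v) y = -(pd β (rotVF i j v) y) := by
  have h : rotVF j i v = fun z => -(rotVF i j v z) := by
    funext z; simp only [rotVF]; ring
  rw [h]
  unfold pd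
  rw [fderiv_fun_neg]
  simp [rotVF, pd]

lemma pd_rot_self (v : (Fin 4 → ℝ) → ℝ) (β : Fin 4) (y : Fin 4 → ℝ) (i : Fin 3) :
    pd β (rotVF i i v) y = 0 := by
  have h : rotVF i i v = fun _ => (0:ℝ) := by
    funext z; simp [rotVF]
  rw [h]
  unfold pd
  simp [fderiv_const]

/-! ### bounds on good quantities for second factor -/

lemma rotsum_generic (F : Fin 3 → Fin 3 → ℝ) (hswap : ∀ i j, F j i = F i j)
    (hself : ∀ i, F i i = 0) (hpos : ∀ i j, 0 ≤ F i j) (i : Fin 3) :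
    ∑ j : Fin 3, F j i ≤ ∑ p : Fin 3, ∑ q : Fin 3, (if p < q then F p q else 0) := by
  have hRHS : ∑ p : Fin 3, ∑ q : Fin 3, (if p < q then F p q else 0)
      = F 0 1 + F 0 2 + F 1 2 := by
    simp [Fin.sum_univ_three]
  rw [hRHS]
  have n01 := hpos 0 1
  have n02 := hpos 0 2
  have n12 := hpos 1 2
  fin_cases i <;>
    simp only [Fin.zero_eta, Fin.mk_one, Fin.reduceFinMk, Fin.sum_univ_three] <;>
    rw [hself] <;>
    [(rw [hswap 0 1, hswap 0 2]); (rw [hswap 1 2]; rw [show F 0 1 = F 1 0 from (hswap 0 1).symm] at n01); skip] <;>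
    first
      | linarith
      | (rw [show F 1 0 = F 0 1 from hswap 0 1] at *; linarith)

lemma scaling_pd_bound (v : (Fin 4 → ℝ) → ℝ) (hv : ContDiff ℝ 2 v) (y : Fin 4 → ℝ) (γ : Fin 4) :
    scalingVF (pd γ v) y = pd γ (scalingVF v) y - pd γ v y := by
  have h1 : scalingVF (pd γ v) y = ∑ α : Fin 4, y α * pd γ (pd α v) y := by
    unfold scalingVF
    exact Finset.sum_congr rfl (fun α _ => by rw [pd_symm v hv y α γ])
  rw [h1, pd_scaling v hv γ y]
  ring

lemma abs_pd_scaling_le (v : (Fin 4 → ℝ) → ℝ) (y : Fin 4 → ℝ) (γ : Fin 4) :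
    |pd γ (scalingVF v) y| ≤ dGammaAbs v y := by
  have h1 : |pd γ (scalingVF v) y| ≤ ∑ β : Fin 4, |pd β (scalingVF v) y| :=
    Finset.single_le_sum (f := fun β => |pd β (scalingVF v) y|)
      (fun _ _ => abs_nonneg _) (Finset.mem_univ γ)
  have h2 : (0:ℝ) ≤ ∑ β : Fin 4, ∑ α : Fin 4, |pd β (pd α v) y| := d2Abs_nonneg v y
  have h3 : (0:ℝ) ≤ ∑ β : Fin 4, ∑ i : Fin 3, ∑ j : Fin 3,
      if i < j then |pd β (rotVF i j v) y| else 0 :=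
    Finset.sum_nonneg fun _ _ => Finset.sum_nonneg fun _ _ =>
      Finset.sum_nonneg fun _ _ => by positivity
  unfold dGammaAbs
  unfold d2Abs at h2
  linarith

lemma abs_scaling_pd_le (v : (Fin 4 → ℝ) → ℝ) (hv : ContDiff ℝ 2 v) (y : Fin 4 → ℝ) (γ : Fin 4) :
    |scalingVF (pd γ v) y| ≤ dGammaAbs v y + dAbs v y := by
  rw [scaling_pd_bound v hv y γ]
  have h1 := abs_pd_scaling_le v y γ
  have h2 := abs_pd_le_dAbs v y γ
  calc |pd γ (scalingVF v) y - pd γ v y| ≤ |pd γ (scalingVF v) y| + |pd γ v y| := abs_sub _ _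
    _ ≤ dGammaAbs v y + dAbs v y := by linarith

lemma abs_pd_rot_le (v : (Fin 4 → ℝ) → ℝ) (y : Fin 4 → ℝ) (γ : Fin 4) (i : Fin 3) :
    ∑ j : Fin 3, |pd γ (rotVF j i v) y| ≤ dGammaAbs v y := by
  have key : ∑ j : Fin 3, |pd γ (rotVF j i v) y|
      ≤ ∑ p : Fin 3, ∑ q : Fin 3, (if p < q then |pd γ (rotVF p q v) y| else 0) := by
    apply rotsum_generic (fun p q => |pd γ (rotVF p q v) y|)
    · intro i j; rw [pd_rot_swap, abs_neg]
    · intro i; rw [pd_rot_self, abs_zero]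
    · intro i j; exact abs_nonneg _
  have h1 : ∑ p : Fin 3, ∑ q : Fin 3, (if p < q then |pd γ (rotVF p q v) y| else 0)
      ≤ ∑ β : Fin 4, ∑ p : Fin 3, ∑ q : Fin 3, (if p < q then |pd β (rotVF p q v) y| else 0) :=
    Finset.single_le_sum
      (f := fun β => ∑ p : Fin 3, ∑ q : Fin 3, (if p < q then |pd β (rotVF p q v) y| else 0))
      (fun _ _ => Finset.sum_nonneg fun _ _ => Finset.sum_nonneg fun _ _ => by positivity)
      (Finset.mem_univ γ)
  have h2 : (0:ℝ) ≤ ∑ β : Fin 4, ∑ α : Fin 4, |pd β (pd α v) y| := d2Abs_nonneg v y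
  have h3 : (0:ℝ) ≤ ∑ β : Fin 4, |pd β (scalingVF v) y| :=
    Finset.sum_nonneg fun _ _ => abs_nonneg _
  unfold dGammaAbs
  unfold d2Abs at h2
  linarith

lemma rot_pd_eq (v : (Fin 4 → ℝ) → ℝ) (hv : ContDiff ℝ 2 v) (y : Fin 4 → ℝ) (γ : Fin 4)
    (i j : Fin 3) :
    rotVF j i (pd γ v) y = pd γ (rotVF j i v) y
      - (if j.succ = γ then 1 else 0) * pd i.succ v y
      + (if i.succ = γ then 1 else 0) * pd j.succ v y := by
  have h := pd_rot v hv j i γ y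
  have h1 : rotVF j i (pd γ v) y
      = y j.succ * pd γ (pd i.succ v) y - y i.succ * pd γ (pd j.succ v) y := by
    simp only [rotVF]
    rw [pd_symm v hv y i.succ γ, pd_symm v hv y j.succ γ]
  rw [h1, h]
  ring

lemma abs_rot_pd_le (v : (Fin 4 → ℝ) → ℝ) (hv : ContDiff ℝ 2 v) (y : Fin 4 → ℝ) (γ : Fin 4)
    (i : Fin 3) :
    ∑ j : Fin 3, |rotVF j i (pd γ v) y| ≤ dGammaAbs v y + 6 * dAbs v y := by
  have hterm : ∀ j : Fin 3, |rotVF j i (pd γ v) y| ≤ |pd γ (rotVF j i v) y| + 2 * dAbs v y := by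
    intro j
    rw [rot_pd_eq v hv y γ i j]
    have h1 := abs_pd_le_dAbs v y i.succ
    have h2 := abs_pd_le_dAbs v y j.succ
    have e1 : |(if j.succ = γ then (1:ℝ) else 0) * pd i.succ v y| ≤ dAbs v y := by
      split <;> simp <;> [exact h1; exact dAbs_nonneg v y]
    have e2 : |(if i.succ = γ then (1:ℝ) else 0) * pd j.succ v y| ≤ dAbs v y := by
      split <;> simp <;> [exact h2; exact dAbs_nonneg v y]
    calc |pd γ (rotVF j i v) y - (if j.succ = γ then (1:ℝ) else 0) * pd i.succ v y
          + (if i.succ = γ then (1:ℝ) else 0) * pd j.succ v y|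
        ≤ |pd γ (rotVF j i v) y - (if j.succ = γ then (1:ℝ) else 0) * pd i.succ v y|
          + |(if i.succ = γ then (1:ℝ) else 0) * pd j.succ v y| := abs_add_le _ _
      _ ≤ |pd γ (rotVF j i v) y| + |(if j.succ = γ then (1:ℝ) else 0) * pd i.succ v y|
          + |(if i.succ = γ then (1:ℝ) else 0) * pd j.succ v y| := by
            have := abs_sub (pd γ (rotVF j i v) y)
              ((if j.succ = γ then (1:ℝ) else 0) * pd i.succ v y)
            linarith
      _ ≤ |pd γ (rotVF j i v) y| + 2 * dAbs v y := by linarith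
  calc ∑ j : Fin 3, |rotVF j i (pd γ v) y|
      ≤ ∑ j : Fin 3, (|pd γ (rotVF j i v) y| + 2 * dAbs v y) :=
        Finset.sum_le_sum fun j _ => hterm j
    _ = (∑ j : Fin 3, |pd γ (rotVF j i v) y|) + 6 * dAbs v y := by
        rw [Finset.sum_add_distrib]
        simp [Finset.sum_const]
        ring
    _ ≤ dGammaAbs v y + 6 * dAbs v y := by
        have := abs_pd_rot_le v y γ i
        linarith

/-! ### lemmas about `g = Σ ω_j ∂_j v` for constants `ω` -/

lemma row_le_d2Abs (v : (Fin 4 → ℝ) → ℝ) (y : Fin 4 → ℝ) (α : Fin 4) :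
    ∑ β : Fin 4, |pd α (pd β v) y| ≤ d2Abs v y :=
  Finset.single_le_sum (f := fun δ => ∑ β : Fin 4, |pd δ (pd β v) y|)
    (fun _ _ => Finset.sum_nonneg fun _ _ => abs_nonneg _) (Finset.mem_univ α)

lemma sumscaling_le_dG (v : (Fin 4 → ℝ) → ℝ) (y : Fin 4 → ℝ) :
    ∑ β : Fin 4, |pd β (scalingVF v) y| ≤ dGammaAbs v y := by
  have h2 : (0:ℝ) ≤ ∑ β : Fin 4, ∑ α : Fin 4, |pd β (pd α v) y| := d2Abs_nonneg v y
  have h3 : (0:ℝ) ≤ ∑ β : Fin 4, ∑ i : Fin 3, ∑ j : Fin 3,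
      if i < j then |pd β (rotVF i j v) y| else 0 :=
    Finset.sum_nonneg fun _ _ => Finset.sum_nonneg fun _ _ =>
      Finset.sum_nonneg fun _ _ => by positivity
  unfold dGammaAbs
  unfold d2Abs at h2
  linarith

lemma pd_g (v : (Fin 4 → ℝ) → ℝ) (hv : ContDiff ℝ 2 v) (ω : Fin 3 → ℝ) (γ : Fin 4)
    (y : Fin 4 → ℝ) :
    pd γ (fun z => ∑ j : Fin 3, ω j * pd j.succ v z) y
      = ∑ j : Fin 3, ω j * pd γ (pd j.succ v) y := by
  have h0 : (fun z => ∑ j : Fin 3, ω j * pd j.succ v z)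
      = fun z => ∑ j : Fin 3, (fun w => ω j * pd j.succ v w) z := rfl
  rw [h0, pd_fun_sum3 _ (fun j => (pd_differentiable v hv j.succ).const_mul (ω j)) γ y]
  exact Finset.sum_congr rfl fun j _ =>
    pd_const_mul _ (pd_differentiable v hv j.succ) (ω j) γ y

lemma pd0_g_le (v : (Fin 4 → ℝ) → ℝ) (hv : ContDiff ℝ 2 v) (ω : Fin 3 → ℝ)
    (hω : ∀ j, |ω j| ≤ 1) (y : Fin 4 → ℝ) :
    |pd 0 (fun z => ∑ j : Fin 3, ω j * pd j.succ v z) y| ≤ d2Abs v y := by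
  rw [pd_g v hv ω 0 y]
  calc |∑ j : Fin 3, ω j * pd 0 (pd j.succ v) y| ≤ ∑ j : Fin 3, |pd 0 (pd j.succ v) y| :=
        abs_sum3_le _ _ hω
    _ ≤ ∑ β : Fin 4, |pd 0 (pd β v) y| :=
        sum_succ_le_sum (fun β => |pd 0 (pd β v) y|) (fun _ => abs_nonneg _)
    _ ≤ d2Abs v y := row_le_d2Abs v y 0

lemma scaling_g_le (v : (Fin 4 → ℝ) → ℝ) (hv : ContDiff ℝ 2 v) (ω : Fin 3 → ℝ)
    (hω : ∀ j, |ω j| ≤ 1) (y : Fin 4 → ℝ) :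
    |scalingVF (fun z => ∑ j : Fin 3, ω j * pd j.succ v z) y|
      ≤ dGammaAbs v y + dAbs v y := by
  have h1 : scalingVF (fun z => ∑ j : Fin 3, ω j * pd j.succ v z) y
      = ∑ j : Fin 3, ω j * (pd j.succ (scalingVF v) y - pd j.succ v y) := by
    calc scalingVF (fun z => ∑ j : Fin 3, ω j * pd j.succ v z) y
        = ∑ α : Fin 4, y α * pd α (fun z => ∑ j : Fin 3, ω j * pd j.succ v z) y := rfl
      _ = ∑ α : Fin 4, y α * ∑ j : Fin 3, ω j * pd α (pd j.succ v) y :=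
          Finset.sum_congr rfl fun α _ => by rw [pd_g v hv ω α y]
      _ = ∑ α : Fin 4, ∑ j : Fin 3, ω j * (y α * pd α (pd j.succ v) y) := by
          refine Finset.sum_congr rfl fun α _ => ?_
          rw [Finset.mul_sum]
          exact Finset.sum_congr rfl fun j _ => by ring
      _ = ∑ j : Fin 3, ∑ α : Fin 4, ω j * (y α * pd α (pd j.succ v) y) := Finset.sum_comm
      _ = ∑ j : Fin 3, ω j * scalingVF (pd j.succ v) y := by
          refine Finset.sum_congr rfl fun j _ => ?_
          rw [← Finset.mul_sum]
          rfl
      _ = ∑ j : Fin 3, ω j * (pd j.succ (scalingVF v) y - pd j.succ v y) :=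
          Finset.sum_congr rfl fun j _ => by rw [scaling_pd_bound v hv y j.succ]
  rw [h1]
  calc |∑ j : Fin 3, ω j * (pd j.succ (scalingVF v) y - pd j.succ v y)|
      ≤ ∑ j : Fin 3, |pd j.succ (scalingVF v) y - pd j.succ v y| := abs_sum3_le _ _ hω
    _ ≤ ∑ j : Fin 3, (|pd j.succ (scalingVF v) y| + |pd j.succ v y|) :=
        Finset.sum_le_sum fun j _ => abs_sub _ _
    _ = (∑ j : Fin 3, |pd j.succ (scalingVF v) y|) + ∑ j : Fin 3, |pd j.succ v y| :=
        Finset.sum_add_distrib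
    _ ≤ dGammaAbs v y + dAbs v y := by
        have ha := (sum_succ_le_sum (fun β => |pd β (scalingVF v) y|)
          (fun _ => abs_nonneg _)).trans (sumscaling_le_dG v y)
        have hb := sum_succ_le_sum (fun β => |pd β v y|) (fun _ => abs_nonneg _)
        unfold dAbs
        linarith

lemma rot_g_le (v : (Fin 4 → ℝ) → ℝ) (hv : ContDiff ℝ 2 v) (ω : Fin 3 → ℝ)
    (hω : ∀ j, |ω j| ≤ 1) (y : Fin 4 → ℝ) (i : Fin 3) :
    ∑ p : Fin 3, |rotVF p i (fun z => ∑ j : Fin 3, ω j * pd j.succ v z) y|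
      ≤ 3 * (dGammaAbs v y + 6 * dAbs v y) := by
  have heq : ∀ p : Fin 3, rotVF p i (fun z => ∑ j : Fin 3, ω j * pd j.succ v z) y
      = ∑ j : Fin 3, ω j * rotVF p i (pd j.succ v) y := by
    intro p
    simp only [rotVF]
    rw [pd_g v hv ω i.succ y, pd_g v hv ω p.succ y, Finset.mul_sum, Finset.mul_sum,
      ← Finset.sum_sub_distrib]
    exact Finset.sum_congr rfl fun j _ => by ring
  calc ∑ p : Fin 3, |rotVF p i (fun z => ∑ j : Fin 3, ω j * pd j.succ v z) y|
      ≤ ∑ p : Fin 3, ∑ j : Fin 3, |rotVF p i (pd j.succ v) y| := by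
        refine Finset.sum_le_sum fun p _ => ?_
        rw [heq p]
        exact abs_sum3_le _ _ hω
    _ = ∑ j : Fin 3, ∑ p : Fin 3, |rotVF p i (pd j.succ v) y| := Finset.sum_comm
    _ ≤ ∑ _j : Fin 3, (dGammaAbs v y + 6 * dAbs v y) :=
        Finset.sum_le_sum fun j _ => abs_rot_pd_le v hv y j.succ i
    _ = 3 * (dGammaAbs v y + 6 * dAbs v y) := by
        rw [Finset.sum_const]
        simp
        ring

/-! ### abstract triple-sum lemmas -/

lemma triple_bound (Q g : Fin 4 → Fin 4 → Fin 4 → ℝ) (B : ℝ)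
    (hg : ∀ α β γ, |g α β γ| ≤ B) :
    |∑ α : Fin 4, ∑ β : Fin 4, ∑ γ : Fin 4, Q α β γ * g α β γ|
      ≤ (∑ α : Fin 4, ∑ β : Fin 4, ∑ γ : Fin 4, |Q α β γ|) * B := by
  have h1 : ∀ α β γ, |Q α β γ * g α β γ| ≤ |Q α β γ| * B := fun α β γ => by
    rw [abs_mul]; exact mul_le_mul_of_nonneg_left (hg α β γ) (abs_nonneg _)
  calc |∑ α : Fin 4, ∑ β : Fin 4, ∑ γ : Fin 4, Q α β γ * g α β γ|
      ≤ ∑ α : Fin 4, |∑ β : Fin 4, ∑ γ : Fin 4, Q α β γ * g α β γ| :=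
        Finset.abs_sum_le_sum_abs _ _
    _ ≤ ∑ α : Fin 4, ∑ β : Fin 4, ∑ γ : Fin 4, |Q α β γ| * B :=
        Finset.sum_le_sum fun α _ =>
          (Finset.abs_sum_le_sum_abs _ _).trans <| Finset.sum_le_sum fun β _ =>
            (Finset.abs_sum_le_sum_abs _ _).trans <| Finset.sum_le_sum fun γ _ => h1 α β γ
    _ = (∑ α : Fin 4, ∑ β : Fin 4, ∑ γ : Fin 4, |Q α β γ|) * B := by
        simp only [Finset.sum_mul]

lemma key_identity (Q : Fin 4 → Fin 4 → Fin 4 → ℝ) (ξ a Ea : Fin 4 → ℝ)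
    (b Rb : Fin 4 → Fin 4 → ℝ) (T W : ℝ)
    (ha : ∀ α, a α = ξ α * T + Ea α) (hb : ∀ β γ, b β γ = ξ β * ξ γ * W + Rb β γ)
    (hz : (∑ α : Fin 4, ∑ β : Fin 4, ∑ γ : Fin 4, Q α β γ * ξ α * ξ β * ξ γ) = 0) :
    ∑ α : Fin 4, ∑ β : Fin 4, ∑ γ : Fin 4, Q α β γ * a α * b β γ
      = ∑ α : Fin 4, ∑ β : Fin 4, ∑ γ : Fin 4,
          Q α β γ * (Ea α * b β γ + ξ α * T * Rb β γ) := by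
  have hid : ∀ α β γ, Q α β γ * a α * b β γ
      = Q α β γ * ξ α * ξ β * ξ γ * (T * W)
        + Q α β γ * (Ea α * b β γ + ξ α * T * Rb β γ) := by
    intro α β γ
    rw [ha α, hb β γ]
    ring
  calc ∑ α : Fin 4, ∑ β : Fin 4, ∑ γ : Fin 4, Q α β γ * a α * b β γ
      = ∑ α : Fin 4, ∑ β : Fin 4, ∑ γ : Fin 4,
          (Q α β γ * ξ α * ξ β * ξ γ * (T * W)
            + Q α β γ * (Ea α * b β γ + ξ α * T * Rb β γ)) :=
        Finset.sum_congr rfl fun α _ => Finset.sum_congr rfl fun β _ =>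
          Finset.sum_congr rfl fun γ _ => hid α β γ
    _ = (∑ α : Fin 4, ∑ β : Fin 4, ∑ γ : Fin 4, Q α β γ * ξ α * ξ β * ξ γ) * (T * W)
        + ∑ α : Fin 4, ∑ β : Fin 4, ∑ γ : Fin 4,
            Q α β γ * (Ea α * b β γ + ξ α * T * Rb β γ) := by
        simp only [Finset.sum_add_distrib, ← Finset.sum_mul]
    _ = ∑ α : Fin 4, ∑ β : Fin 4, ∑ γ : Fin 4,
          Q α β γ * (Ea α * b β γ + ξ α * T * Rb β γ) := by
        rw [hz]; ring

lemma numeric_lemma (p K A1 A2 A3 A4 : ℝ) (hp : 0 ≤ p) (hpK : p ≤ K) (hK : 0 ≤ K)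
    (hA1 : 0 ≤ A1) (hA2 : 0 ≤ A2) (hA3 : 0 ≤ A3) (hA4 : 0 ≤ A4) :
    p * A1 + p * A4 + (K * A2 + K * A3 + K * A4)
      ≤ 2 * K * A1 + 2 * K * A2 + 2 * K * A3 + 2 * K * A4 := by
  have h1 : p * A1 ≤ K * A1 := mul_le_mul_of_nonneg_right hpK hA1
  have h4 : p * A4 ≤ K * A4 := mul_le_mul_of_nonneg_right hpK hA4
  have n1 : 0 ≤ K * A1 := mul_nonneg hK hA1
  have n2 : 0 ≤ K * A2 := mul_nonneg hK hA2
  have n3 : 0 ≤ K * A3 := mul_nonneg hK hA3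
  have n4 : 0 ≤ K * A4 := mul_nonneg hK hA4
  linarith

set_option maxHeartbeats 2000000 in
/-- Pointwise quasilinear null-form estimate: if the constant coefficients `Q^{αβγ}`
satisfy the null condition relative to the speed `c`, then on the region
`r ≥ ct/2`, `t ≥ 0`,
`|Q^{αβγ} ∂_α u ∂_β∂_γ v| ≤ (C/⟨r⟩)(|Γu||∂²v| + |∂u||∂Γv| + |∂u||∂v| + ⟨ct-r⟩|∂u||∂²v|)`. -/
theorem stmt_7 (c : ℝ) (hc : 0 < c) (Q : Fin 4 → Fin 4 → Fin 4 → ℝ)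
    (hnull : ∀ ξ : Fin 4 → ℝ, ξ 0 ^ 2 = c ^ 2 * ∑ i : Fin 3, (ξ i.succ) ^ 2 →
      ∑ α : Fin 4, ∑ β : Fin 4, ∑ γ : Fin 4, Q α β γ * ξ α * ξ β * ξ γ = 0) :
    ∃ C : ℝ, 0 < C ∧ ∀ u v : (Fin 4 → ℝ) → ℝ, ContDiff ℝ 2 u → ContDiff ℝ 2 v →
      ∀ y : Fin 4 → ℝ, 0 ≤ y 0 → c * y 0 / 2 ≤ spr y →
        |∑ α : Fin 4, ∑ β : Fin 4, ∑ γ : Fin 4, Q α β γ * pd α u y * pd β (pd γ v) y| ≤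
          C / jb (spr y) *
            (gammaAbs u y * d2Abs v y + dAbs u y * dGammaAbs v y +
              dAbs u y * dAbs v y + jb (c * y 0 - spr y) * dAbs u y * d2Abs v y) := by
  classical
  set M : ℝ := ∑ α : Fin 4, ∑ β : Fin 4, ∑ γ : Fin 4, |Q α β γ| with hMdef
  have hM0 : 0 ≤ M := Finset.sum_nonneg fun _ _ => Finset.sum_nonneg fun _ _ =>
    Finset.sum_nonneg fun _ _ => abs_nonneg _
  have hsqrt2 : (0:ℝ) < Real.sqrt 2 := Real.sqrt_pos.2 (by norm_num)
  have hK1 : (1:ℝ) ≤ 42 * (c+1)^2 * (c+2) := by nlinarith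
  refine ⟨Real.sqrt 2 * ((M + 1) * (42 * (c+1)^2 * (c+2))), by positivity, ?_⟩
  intro u v hu hv y ht _hry
  have hr0 : 0 ≤ spr y := Real.sqrt_nonneg _
  have hr2 : (spr y) ^ 2 = ∑ i : Fin 3, (y i.succ) ^ 2 :=
    Real.sq_sqrt (Finset.sum_nonneg fun _ _ => sq_nonneg _)
  have hjq1 : 1 ≤ jb (c * y 0 - spr y) := one_le_jb _
  have hGa := gammaAbs_nonneg u y
  have hdAu := dAbs_nonneg u y
  have hdAv := dAbs_nonneg v y
  have hd2 := d2Abs_nonneg v y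
  have hdG := dGammaAbs_nonneg v y
  have hjbr : 0 < jb (spr y) := jb_pos _
  set r := spr y with hrdef
  set jq := jb (c * y 0 - r) with hjqdef
  have hjq0 : (0:ℝ) ≤ jq := by linarith
  set Brk := gammaAbs u y * d2Abs v y + dAbs u y * dGammaAbs v y +
      dAbs u y * dAbs v y + jq * dAbs u y * d2Abs v y with hBrkdef
  have hBrk0 : 0 ≤ Brk := by
    rw [hBrkdef]
    nlinarith [mul_nonneg hGa hd2, mul_nonneg hdAu hdG, mul_nonneg hdAu hdAv,
      mul_nonneg (mul_nonneg hjq0 hdAu) hd2]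
  rcases le_or_gt r 1 with hcase | hcase
  · -- small r : trivial estimate
    have hLHS : |∑ α : Fin 4, ∑ β : Fin 4, ∑ γ : Fin 4,
          Q α β γ * pd α u y * pd β (pd γ v) y|
        ≤ M * (dAbs u y * d2Abs v y) := by
      have heq : (∑ α : Fin 4, ∑ β : Fin 4, ∑ γ : Fin 4,
            Q α β γ * pd α u y * pd β (pd γ v) y)
          = ∑ α : Fin 4, ∑ β : Fin 4, ∑ γ : Fin 4,
            Q α β γ * (pd α u y * pd β (pd γ v) y) :=
        Finset.sum_congr rfl fun α _ => Finset.sum_congr rfl fun β _ =>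
          Finset.sum_congr rfl fun γ _ => by ring
      rw [heq]
      exact triple_bound Q _ _ (fun α β γ => by
        rw [abs_mul]
        exact mul_le_mul (abs_pd_le_dAbs u y α) (abs_pd2_le_d2Abs v y β γ)
          (abs_nonneg _) hdAu)
    have hjb2 : jb r ≤ Real.sqrt 2 := jb_le_sqrt2 r hr0 hcase
    have hC1 : (M + 1) * (42 * (c+1)^2 * (c+2))
        ≤ Real.sqrt 2 * ((M + 1) * (42 * (c+1)^2 * (c+2))) / jb r := by
      rw [le_div_iff₀ hjbr]
      calc (M + 1) * (42 * (c+1)^2 * (c+2)) * jb r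
          ≤ (M + 1) * (42 * (c+1)^2 * (c+2)) * Real.sqrt 2 :=
            mul_le_mul_of_nonneg_left hjb2 (by positivity)
        _ = Real.sqrt 2 * ((M + 1) * (42 * (c+1)^2 * (c+2))) := by ring
    have hBrk1 : dAbs u y * d2Abs v y ≤ Brk := by
      rw [hBrkdef]
      nlinarith [mul_nonneg hGa hd2, mul_nonneg hdAu hdG, mul_nonneg hdAu hdAv,
        mul_nonneg hdAu hd2]
    calc |∑ α : Fin 4, ∑ β : Fin 4, ∑ γ : Fin 4,
          Q α β γ * pd α u y * pd β (pd γ v) y|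
        ≤ M * (dAbs u y * d2Abs v y) := hLHS
      _ ≤ M * Brk := mul_le_mul_of_nonneg_left hBrk1 hM0
      _ ≤ (M + 1) * (42 * (c+1)^2 * (c+2)) * Brk :=
          mul_le_mul_of_nonneg_right (by nlinarith) hBrk0
      _ ≤ Real.sqrt 2 * ((M + 1) * (42 * (c+1)^2 * (c+2))) / jb r * Brk :=
          mul_le_mul_of_nonneg_right hC1 hBrk0
  · -- large r : null structure
    have hrpos : (0:ℝ) < r := by linarith
    have hrne : r ≠ 0 := ne_of_gt hrpos
    have hr1 : (1:ℝ) ≤ r := le_of_lt hcase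
    have hjqabs : |c * y 0 - r| ≤ jq := by rw [hjqdef]; exact abs_le_jb _
    set ξ : Fin 4 → ℝ :=
      Fin.cons (α := fun _ : Fin 4 => ℝ) (-c) (fun i : Fin 3 => y i.succ / r) with hξdef
    have hξ0 : ξ 0 = -c := by rw [hξdef]; rfl
    have hξs : ∀ i : Fin 3, ξ i.succ = y i.succ / r := fun i => by
      rw [hξdef]; exact Fin.cons_succ _ _ _
    have hξb : ∀ α : Fin 4, |ξ α| ≤ c + 1 := by
      intro α
      induction α using Fin.cases with
      | zero => rw [hξ0, abs_neg, abs_of_pos hc]; linarith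
      | succ i =>
          rw [hξs i]
          have := abs_omega_le_one y r hr1 hr2 i
          linarith
    have hz' : ∑ α : Fin 4, ∑ β : Fin 4, ∑ γ : Fin 4,
        Q α β γ * ξ α * ξ β * ξ γ = 0 := by
      apply hnull
      rw [hξ0]
      rw [Finset.sum_congr rfl fun i (_ : i ∈ Finset.univ) => by rw [hξs i]]
      simp only [Fin.sum_univ_three, fin3_succ_zero, fin3_succ_one, fin3_succ_two] at hr2 ⊢
      field_simp
      linear_combination hr2
    -- radial derivative of u and its bound
    set T := ∑ j : Fin 3, y j.succ / r * pd j.succ u y with hTdef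
    have hTb : |T| ≤ dAbs u y := by
      rw [hTdef]
      calc |∑ j : Fin 3, y j.succ / r * pd j.succ u y|
          ≤ ∑ j : Fin 3, |pd j.succ u y| := abs_sum3_le _ _ (abs_omega_le_one y r hr1 hr2)
        _ ≤ dAbs u y := by
            unfold dAbs
            exact sum_succ_le_sum (fun β => |pd β u y|) (fun _ => abs_nonneg _)
    set GU := (c+1) * (gammaAbs u y + jq * dAbs u y) with hGUdef
    have hGU0 : 0 ≤ GU := by rw [hGUdef]; nlinarith [mul_nonneg hjq0 hdAu]
    have hA : ∀ α : Fin 4, |pd α u y - ξ α * T| ≤ GU / r := by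
      simp only [hξdef, hTdef]
      exact decomp_bound c r hc hr1 y hr2 u jq (gammaAbs u y) (dAbs u y) (gammaAbs u y) GU
        hjqabs (abs_scaling_le_gamma u y) (abs_pd_le_dAbs u y 0) (rotsum_le_gamma u y)
        (by rw [hGUdef]; nlinarith [mul_nonneg hjq0 hdAu])
        (by rw [hGUdef]; nlinarith [mul_nonneg hjq0 hdAu])
    -- the auxiliary function g and its derivative
    set gf : (Fin 4 → ℝ) → ℝ := fun z => ∑ j : Fin 3, y j.succ / r * pd j.succ v z with hgfdef
    set c' : Fin 4 → ℝ := fun γ => pd γ gf y with hc'def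
    set W : ℝ := ∑ j : Fin 3, y j.succ / r * pd j.succ gf y with hWdef
    set GV := dGammaAbs v y + dAbs v y + jq * d2Abs v y with hGVdef
    set G := 21 * (c+1) * GV with hGdef
    have hGV0 : 0 ≤ GV := by rw [hGVdef]; nlinarith [mul_nonneg hjq0 hd2]
    have hG0 : 0 ≤ G := by rw [hGdef]; nlinarith
    have hGor : 0 ≤ G / r := div_nonneg hG0 hr0
    have hGc1 : c * (dGammaAbs v y + dAbs v y) + jq * d2Abs v y ≤ G := by
      rw [hGdef, hGVdef]; nlinarith [mul_nonneg hjq0 hd2]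
    have hGc2 : 3 * (dGammaAbs v y + 6 * dAbs v y) ≤ G := by
      rw [hGdef, hGVdef]; nlinarith [mul_nonneg hjq0 hd2]
    have hSB : |scalingVF gf y| ≤ dGammaAbs v y + dAbs v y := by
      rw [hgfdef]
      exact scaling_g_le v hv (fun j => y j.succ / r) (abs_omega_le_one y r hr1 hr2) y
    have hPB : |pd 0 gf y| ≤ d2Abs v y := by
      rw [hgfdef]
      exact pd0_g_le v hv (fun j => y j.succ / r) (abs_omega_le_one y r hr1 hr2) y
    have hRB : ∀ i : Fin 3, (∑ p : Fin 3, |rotVF p i gf y|) ≤ 3 * (dGammaAbs v y + 6 * dAbs v y) := by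
      intro i
      rw [hgfdef]
      exact rot_g_le v hv (fun j => y j.succ / r) (abs_omega_le_one y r hr1 hr2) y i
    have hB : ∀ γ : Fin 4, |c' γ - ξ γ * W| ≤ G / r := by
      simp only [hc'def, hWdef, hξdef]
      exact decomp_bound c r hc hr1 y hr2 gf jq (dGammaAbs v y + dAbs v y) (d2Abs v y)
        (3 * (dGammaAbs v y + 6 * dAbs v y)) G hjqabs hSB hPB hRB hGc1 hGc2
    have hsymsum : ∀ γ : Fin 4, (∑ j : Fin 3, y j.succ / r * pd j.succ (pd γ v) y) = c' γ := by
      intro γ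
      simp only [hc'def]
      calc (∑ j : Fin 3, y j.succ / r * pd j.succ (pd γ v) y)
          = ∑ j : Fin 3, y j.succ / r * pd γ (pd j.succ v) y :=
            Finset.sum_congr rfl fun j _ => by rw [pd_symm v hv y j.succ γ]
        _ = pd γ gf y := by
            rw [hgfdef]
            exact (pd_g v hv (fun j => y j.succ / r) γ y).symm
    have hC : ∀ β γ : Fin 4, |pd β (pd γ v) y - ξ β * c' γ| ≤ G / r := by
      intro β γ
      have h0 := decomp_bound c r hc hr1 y hr2 (pd γ v) jq (dGammaAbs v y + dAbs v y)
        (d2Abs v y) (3 * (dGammaAbs v y + 6 * dAbs v y)) G hjqabs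
        (abs_scaling_pd_le v hv y γ) (abs_pd2_le_d2Abs v y 0 γ)
        (fun i => (abs_rot_pd_le v hv y γ i).trans (by nlinarith)) hGc1 hGc2 β
      rw [← hsymsum γ, hξdef]
      exact h0
    -- remainder bound for the second factor
    have hRb : ∀ β γ : Fin 4, |pd β (pd γ v) y - ξ β * ξ γ * W| ≤ (c+2) * (G / r) := by
      intro β γ
      have hdecomp : pd β (pd γ v) y - ξ β * ξ γ * W
          = ξ β * (c' γ - ξ γ * W) + (pd β (pd γ v) y - ξ β * c' γ) := by ring
      rw [hdecomp]
      have habs : |ξ β * (c' γ - ξ γ * W) + (pd β (pd γ v) y - ξ β * c' γ)|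
          ≤ |ξ β| * |c' γ - ξ γ * W| + |pd β (pd γ v) y - ξ β * c' γ| := by
        have h := abs_add_le (ξ β * (c' γ - ξ γ * W)) (pd β (pd γ v) y - ξ β * c' γ)
        rw [abs_mul] at h
        exact h
      have h1 : |ξ β| * |c' γ - ξ γ * W| ≤ (c+1) * (G/r) :=
        mul_le_mul (hξb β) (hB γ) (abs_nonneg _) (by linarith)
      have h2 := hC β γ
      calc |ξ β * (c' γ - ξ γ * W) + (pd β (pd γ v) y - ξ β * c' γ)|
          ≤ |ξ β| * |c' γ - ξ γ * W| + |pd β (pd γ v) y - ξ β * c' γ| := habs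
        _ ≤ (c+1) * (G/r) + G/r := by linarith
        _ = (c+2) * (G/r) := by ring
    -- null-form identity
    have hkey : (∑ α : Fin 4, ∑ β : Fin 4, ∑ γ : Fin 4,
          Q α β γ * pd α u y * pd β (pd γ v) y)
        = ∑ α : Fin 4, ∑ β : Fin 4, ∑ γ : Fin 4,
            Q α β γ * ((pd α u y - ξ α * T) * pd β (pd γ v) y
              + ξ α * T * (pd β (pd γ v) y - ξ β * ξ γ * W)) :=
      key_identity Q ξ (fun α => pd α u y) (fun α => pd α u y - ξ α * T)
        (fun β γ => pd β (pd γ v) y) (fun β γ => pd β (pd γ v) y - ξ β * ξ γ * W) T W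
        (fun α => by ring) (fun β γ => by ring) hz'
    set B2 := GU / r * d2Abs v y + (c+1) * dAbs u y * ((c+2) * (G/r)) with hB2def
    have htb : |∑ α : Fin 4, ∑ β : Fin 4, ∑ γ : Fin 4,
          Q α β γ * ((pd α u y - ξ α * T) * pd β (pd γ v) y
            + ξ α * T * (pd β (pd γ v) y - ξ β * ξ γ * W))| ≤ M * B2 := by
      apply triple_bound
      intro α β γ
      have e1 : |(pd α u y - ξ α * T) * pd β (pd γ v) y| ≤ GU / r * d2Abs v y := by
        rw [abs_mul]
        exact mul_le_mul (hA α) (abs_pd2_le_d2Abs v y β γ) (abs_nonneg _)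
          (div_nonneg hGU0 hr0)
      have e2 : |ξ α * T * (pd β (pd γ v) y - ξ β * ξ γ * W)|
          ≤ (c+1) * dAbs u y * ((c+2) * (G/r)) := by
        rw [abs_mul, abs_mul]
        have f1 : |ξ α| * |T| ≤ (c+1) * dAbs u y :=
          mul_le_mul (hξb α) hTb (abs_nonneg _) (by linarith)
        exact mul_le_mul f1 (hRb β γ) (abs_nonneg _)
          (mul_nonneg (by linarith) hdAu)
      calc |(pd α u y - ξ α * T) * pd β (pd γ v) y
            + ξ α * T * (pd β (pd γ v) y - ξ β * ξ γ * W)|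
          ≤ |(pd α u y - ξ α * T) * pd β (pd γ v) y|
            + |ξ α * T * (pd β (pd γ v) y - ξ β * ξ γ * W)| := abs_add_le _ _
        _ ≤ B2 := by rw [hB2def]; linarith
    -- final numeric assembly
    have hstep1 : GU * d2Abs v y + (c+1) * dAbs u y * ((c+2) * G)
        ≤ 42 * (c+1)^2 * (c+2) * Brk := by
      have e1 : GU * d2Abs v y + (c+1) * dAbs u y * ((c+2) * G)
          = (c+1) * (gammaAbs u y * d2Abs v y)
            + (c+1) * (jq * (dAbs u y * d2Abs v y))
            + ((21*(c+1)^2*(c+2)) * (dAbs u y * dGammaAbs v y)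
              + (21*(c+1)^2*(c+2)) * (dAbs u y * dAbs v y)
              + (21*(c+1)^2*(c+2)) * (jq * (dAbs u y * d2Abs v y))) := by
        rw [hGUdef, hGdef, hGVdef]; ring
      have e2 : 42 * (c+1)^2 * (c+2) * Brk
          = 2 * (21*(c+1)^2*(c+2)) * (gammaAbs u y * d2Abs v y)
            + 2 * (21*(c+1)^2*(c+2)) * (dAbs u y * dGammaAbs v y)
            + 2 * (21*(c+1)^2*(c+2)) * (dAbs u y * dAbs v y)
            + 2 * (21*(c+1)^2*(c+2)) * (jq * (dAbs u y * d2Abs v y)) := by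
        rw [hBrkdef]; ring
      rw [e1, e2]
      exact numeric_lemma (c+1) (21*(c+1)^2*(c+2)) _ _ _ _
        (by linarith) (by nlinarith) (by positivity)
        (mul_nonneg hGa hd2) (mul_nonneg hdAu hdG) (mul_nonneg hdAu hdAv)
        (mul_nonneg hjq0 (mul_nonneg hdAu hd2))
    have hB2eq : B2 = (GU * d2Abs v y + (c+1) * dAbs u y * ((c+2) * G)) / r := by
      rw [hB2def]
      ring
    have hfinal : M * B2 ≤ Real.sqrt 2 * ((M + 1) * (42 * (c+1)^2 * (c+2))) / jb r * Brk := by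
      have h1 : M * B2 ≤ M * ((42*(c+1)^2*(c+2) * Brk) / r) := by
        apply mul_le_mul_of_nonneg_left _ hM0
        rw [hB2eq]
        exact (div_le_div_iff_of_pos_right hrpos).2 hstep1
      have h2 : M * ((42*(c+1)^2*(c+2) * Brk) / r) = (M * (42*(c+1)^2*(c+2)) / r) * Brk := by
        ring
      have h3 : M * (42*(c+1)^2*(c+2)) / r
          ≤ Real.sqrt 2 * ((M + 1) * (42 * (c+1)^2 * (c+2))) / jb r := by
        rw [div_le_div_iff₀ hrpos hjbr]
        have hjb : jb r ≤ Real.sqrt 2 * r := jb_le_sqrt2_mul r hr1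
        have hMK0 : (0:ℝ) ≤ M * (42*(c+1)^2*(c+2)) := mul_nonneg hM0 (by positivity)
        have t1 : M * (42*(c+1)^2*(c+2)) * jb r
            ≤ M * (42*(c+1)^2*(c+2)) * (Real.sqrt 2 * r) :=
          mul_le_mul_of_nonneg_left hjb hMK0
        have t2 : M * (42*(c+1)^2*(c+2)) * (Real.sqrt 2 * r)
            ≤ (M+1) * (42*(c+1)^2*(c+2)) * (Real.sqrt 2 * r) := by
          apply mul_le_mul_of_nonneg_right _ (by positivity)
          exact mul_le_mul_of_nonneg_right (by linarith) (by positivity)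
        calc M * (42*(c+1)^2*(c+2)) * jb r
            ≤ M * (42*(c+1)^2*(c+2)) * (Real.sqrt 2 * r) := t1
          _ ≤ (M+1) * (42*(c+1)^2*(c+2)) * (Real.sqrt 2 * r) := t2
          _ = Real.sqrt 2 * ((M + 1) * (42 * (c+1)^2 * (c+2))) * r := by ring
      calc M * B2 ≤ M * ((42*(c+1)^2*(c+2) * Brk) / r) := h1
        _ = (M * (42*(c+1)^2*(c+2)) / r) * Brk := h2
        _ ≤ Real.sqrt 2 * ((M + 1) * (42 * (c+1)^2 * (c+2))) / jb r * Brk :=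
            mul_le_mul_of_nonneg_right h3 hBrk0
    rw [hkey]
    exact le_trans htb hfinal
end

section
/- Let S(∂u, ∂v) = S^{αβ} ∂_α u ∂_β v with constant coefficients satisfying the null condition S^{αβ} ξ_α ξ_β = 0 whenever ξ₀² = c²(ξ₁²+ξ₂²+ξ₃²). Then there is a constant C such that for all C¹ functions u, v on ℝ^{1+3} and all (t,x) with r = |x| ≥ ct/2, |S^{αβ} ∂_α u ∂_β v| ≤ (C/⟨r⟩)[ |Γu| |∂v| + |∂u| |Γv| + ⟨ct − r⟩ |∂u| |∂v| ]. -/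
set_option maxHeartbeats 2000000


lemma jb_le_two_mul (r : ℝ) (hr : 1 ≤ r) : jb r ≤ 2 * r := by
  rw [jb, show 2*r = Real.sqrt ((2*r)^2) by rw [Real.sqrt_sq (by linarith)]]
  exact Real.sqrt_le_sqrt (by nlinarith)

lemma absSum2 (S E : Fin 4 → Fin 4 → ℝ) {B : ℝ} (hB : ∀ α β, |E α β| ≤ B) :
    |∑ α, ∑ β, S α β * E α β| ≤ (∑ α, ∑ β, |S α β|) * B := by
  calc |∑ α, ∑ β, S α β * E α β| ≤ ∑ α, |∑ β, S α β * E α β| :=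
        Finset.abs_sum_le_sum_abs _ _
    _ ≤ ∑ α, ∑ β, |S α β * E α β| :=
        Finset.sum_le_sum fun α _ => Finset.abs_sum_le_sum_abs _ _
    _ ≤ ∑ α, ∑ β, |S α β| * B := by
        refine Finset.sum_le_sum fun α _ => Finset.sum_le_sum fun β _ => ?_
        rw [abs_mul]
        exact mul_le_mul_of_nonneg_left (hB α β) (abs_nonneg _)
    _ = (∑ α, ∑ β, |S α β|) * B := by rw [Finset.sum_mul]; simp [Finset.sum_mul]

lemma null_decomp (S : Fin 4 → Fin 4 → ℝ) (m p q : Fin 4 → ℝ) (Dp Dq : ℝ)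
    (h0 : ∑ α, ∑ β, S α β * m α * m β = 0) :
    ∑ α, ∑ β, S α β * p α * q β
      = ∑ α, ∑ β, S α β * (m α * Dp * (q β - m β * Dq)
          + (p α - m α * Dp) * (m β * Dq)
          + (p α - m α * Dp) * (q β - m β * Dq)) := by
  have h1 : ∑ α : Fin 4, ∑ β : Fin 4, S α β * p α * q β
      = (Dp * Dq) * (∑ α : Fin 4, ∑ β : Fin 4, S α β * m α * m β)
        + ∑ α : Fin 4, ∑ β : Fin 4, S α β * (m α * Dp * (q β - m β * Dq)
          + (p α - m α * Dp) * (m β * Dq)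
          + (p α - m α * Dp) * (q β - m β * Dq)) := by
    rw [Finset.mul_sum, ← Finset.sum_add_distrib]
    refine Finset.sum_congr rfl fun α _ => ?_
    rw [Finset.mul_sum, ← Finset.sum_add_distrib]
    refine Finset.sum_congr rfl fun β _ => ?_
    ring
  rw [h1, h0, mul_zero, zero_add]
lemma rotsum (P : Fin 3 → Fin 3 → ℝ) (hd : ∀ a, P a a = 0)
    (hs : ∀ a b, |P a b| = |P b a|) (i : Fin 3) :
    ∑ j, |P i j| ≤ 2 * ∑ a, ∑ b, (if a < b then |P a b| else 0) := by
  have h1 : ∑ j, |P i j| ≤ ∑ a, ∑ j, |P a j| :=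
    Finset.single_le_sum (f := fun a => ∑ j, |P a j|)
      (fun a _ => Finset.sum_nonneg fun j _ => abs_nonneg _) (Finset.mem_univ i)
  have h2 : ∑ a, ∑ b, |P a b| = 2 * ∑ a, ∑ b, (if a < b then |P a b| else 0) := by
    simp only [Fin.sum_univ_three]
    norm_num [Fin.lt_def]
    rw [hd 0, hd 1, hd 2, hs 1 0, hs 2 0, hs 2 1]
    simp; ring
  linarith

noncomputable def mv (c : ℝ) (x : Fin 3 → ℝ) (r : ℝ) : Fin 4 → ℝ :=
  Fin.cons (-c) (fun i => x i / r)

lemma gradBound (c r t : ℝ) (p : Fin 4 → ℝ) (x : Fin 3 → ℝ) (G A : ℝ)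
    (hc : 0 < c) (hr : 1 ≤ r) (ht : 0 ≤ t)
    (hx : ∑ i, x i ^ 2 = r ^ 2) (hlt : c * t ≤ 2 * r)
    (hA : A = ∑ α, |p α|)
    (hG1 : |t * p 0 + ∑ i, x i * p i.succ| ≤ G)
    (hG2 : ∑ a, ∑ b, (if a < b then |x a * p b.succ - x b * p a.succ| else 0) ≤ G)
    (hGA : A ≤ G) (α : Fin 4) :
    jb r * |p α - mv c x r α * ∑ i, x i / r * p i.succ| ≤
      6 * (c + 1) * (G + jb (c * t - r) * A) := by
  have hr0 : (0:ℝ) < r := lt_of_lt_of_le one_pos hr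
  set D := ∑ i, x i / r * p i.succ with hD
  set J := jb (c * t - r) with hJ
  have hxr : ∀ i, |x i| ≤ r := by
    intro i
    have h1 : x i ^ 2 ≤ r ^ 2 := by
      rw [← hx]
      exact Finset.single_le_sum (f := fun i => x i ^ 2) (fun j _ => sq_nonneg _)
        (Finset.mem_univ i)
    nlinarith [abs_nonneg (x i), sq_abs (x i)]
  have hsplit : ∑ α : Fin 4, |p α| = |p 0| + ∑ i : Fin 3, |p i.succ| :=
    Fin.sum_univ_succ _
  have hsucc_le : ∑ i : Fin 3, |p i.succ| ≤ A := by
    have := abs_nonneg (p 0); rw [hA, hsplit]; linarith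
  have hp0 : |p 0| ≤ A := by
    have : (0:ℝ) ≤ ∑ i : Fin 3, |p i.succ| :=
      Finset.sum_nonneg fun i _ => abs_nonneg _
    rw [hA, hsplit]; linarith
  have hDle : |D| ≤ A := by
    calc |D| ≤ ∑ i, |x i / r * p i.succ| := Finset.abs_sum_le_sum_abs _ _
      _ ≤ ∑ i : Fin 3, |p i.succ| := by
          refine Finset.sum_le_sum fun i _ => ?_
          rw [abs_mul]
          refine mul_le_of_le_one_left (abs_nonneg _) ?_
          rw [abs_div, abs_of_pos hr0, div_le_one hr0]
          exact hxr i
      _ ≤ A := hsucc_le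
  have hAnn : 0 ≤ A := hA ▸ Finset.sum_nonneg fun i _ => abs_nonneg _
  have hGnn : 0 ≤ G := le_trans hAnn hGA
  have hJnn : (1:ℝ) ≤ J := one_le_jb _
  have hjb2r : jb r ≤ 2 * r := jb_le_two_mul r hr
  have hJA : 0 ≤ J * A := mul_nonneg (by linarith) hAnn
  have hcG : 0 ≤ c * G := mul_nonneg hc.le hGnn
  have hcJA : 0 ≤ c * (J * A) := mul_nonneg hc.le hJA
  have hxd : ∑ i, x i * p i.succ = r * D := by
    rw [hD, Finset.mul_sum]
    refine Finset.sum_congr rfl fun i _ => ?_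
    field_simp
  induction α using Fin.cases with
  | zero =>
    simp only [mv, Fin.cons_zero]
    have hgoal : ∀ X : ℝ, X = p 0 - (-c) * D →
        jb r * |X| ≤ 6 * (c + 1) * (G + J * A) := by
      intro X hX
      rcases le_or_gt r (2 * (c * t)) with hcase | hcase
      · -- c t ≥ r/2
        have htpos : 0 < t := by nlinarith
        have hident : t * X = (t * p 0 + ∑ i, x i * p i.succ) + (c * t - r) * D := by
          rw [hxd, hX]; ring
        have habs : t * |X| ≤ G + J * A := by
          have h1 : |t * X| ≤ G + J * A := by
            rw [hident]
            calc |t * p 0 + ∑ i, x i * p i.succ + (c * t - r) * D|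
                ≤ |t * p 0 + ∑ i, x i * p i.succ| + |(c * t - r) * D| := abs_add_le _ _
              _ ≤ G + J * A := by
                  rw [abs_mul]
                  have := mul_le_mul (abs_le_jb (c * t - r)) hDle (abs_nonneg _)
                    (le_trans (abs_nonneg _) (abs_le_jb _))
                  linarith
          rwa [abs_mul, abs_of_pos htpos] at h1
        have hjb : jb r ≤ 4 * (c * t) := by linarith
        calc jb r * |X| ≤ (4 * (c * t)) * |X| :=
              mul_le_mul_of_nonneg_right hjb (abs_nonneg _)
          _ = 4 * c * (t * |X|) := by ring
          _ ≤ 4 * c * (G + J * A) := by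
              refine mul_le_mul_of_nonneg_left habs (by positivity)
          _ ≤ 6 * (c + 1) * (G + J * A) := by linarith [hGnn, hJA, hcG, hcJA]
      · -- c t < r/2
        have hJr : r ≤ 2 * J := by
          have h1 : r - c * t ≤ |c * t - r| := by
            rw [abs_sub_comm]; exact le_abs_self _
          have h2 := abs_le_jb (c * t - r)
          have h3 : 0 ≤ c * t := mul_nonneg hc.le ht
          rw [← hJ] at h2
          linarith
        have hXle : |X| ≤ (1 + c) * A := by
          rw [hX]
          calc |p 0 - (-c) * D| ≤ |p 0| + |(-c) * D| := abs_sub _ _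
            _ ≤ A + c * A := by
                rw [abs_mul, abs_neg, abs_of_pos hc]
                have := mul_le_mul_of_nonneg_left hDle hc.le
                linarith
            _ = (1 + c) * A := by ring
        calc jb r * |X| ≤ (2 * r) * |X| := mul_le_mul_of_nonneg_right hjb2r (abs_nonneg _)
          _ ≤ (4 * J) * ((1 + c) * A) := by
              refine mul_le_mul (by linarith) hXle (abs_nonneg _) (by positivity)
          _ ≤ 6 * (c + 1) * (G + J * A) := by linarith [hGnn, hJA, hcG, hcJA]
    exact hgoal _ rfl
  | succ i =>
    simp only [mv, Fin.cons_succ]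
    have hident : r ^ 2 * (p i.succ - x i / r * D) =
        ∑ j, x j * (x j * p i.succ - x i * p j.succ) := by
      have h1 : ∑ j, x j * (x j * p i.succ - x i * p j.succ)
          = (∑ j, x j ^ 2) * p i.succ - x i * ∑ j, x j * p j.succ := by
        rw [Finset.sum_mul, Finset.mul_sum, ← Finset.sum_sub_distrib]
        refine Finset.sum_congr rfl fun j _ => ?_
        ring
      rw [h1, hx, hxd]
      field_simp
    have hPbound : r * |p i.succ - x i / r * D| ≤ 2 * G := by
      have h1 : r ^ 2 * |p i.succ - x i / r * D| ≤ r * (2 * G) := by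
        calc r ^ 2 * |p i.succ - x i / r * D| = |r ^ 2 * (p i.succ - x i / r * D)| := by
              rw [abs_mul, abs_of_pos (by positivity : (0:ℝ) < r ^ 2)]
          _ = |∑ j, x j * (x j * p i.succ - x i * p j.succ)| := by rw [hident]
          _ ≤ ∑ j, |x j * (x j * p i.succ - x i * p j.succ)| := Finset.abs_sum_le_sum_abs _ _
          _ ≤ ∑ j, r * |x j * p i.succ - x i * p j.succ| := by
              refine Finset.sum_le_sum fun j _ => ?_
              rw [abs_mul]
              exact mul_le_mul_of_nonneg_right (hxr j) (abs_nonneg _)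
          _ = r * ∑ j, |x i * p j.succ - x j * p i.succ| := by
              rw [Finset.mul_sum]
              exact Finset.sum_congr rfl fun j _ => by rw [abs_sub_comm]
          _ ≤ r * (2 * G) := by
              refine mul_le_mul_of_nonneg_left ?_ hr0.le
              have := rotsum (fun a b => x a * p b.succ - x b * p a.succ)
                (fun a => by simp) (fun a b => by rw [abs_sub_comm]) i
              linarith
      have h2 : r * (r * |p i.succ - x i / r * D|) ≤ r * (2 * G) := by linarith [h1]
      exact le_of_mul_le_mul_left h2 hr0
    calc jb r * |p i.succ - x i / r * D| ≤ 2 * r * |p i.succ - x i / r * D| :=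
          mul_le_mul_of_nonneg_right hjb2r (abs_nonneg _)
      _ ≤ 2 * (2 * G) := by linarith [hPbound]
      _ ≤ 6 * (c + 1) * (G + J * A) := by linarith [hGnn, hJA, hcG, hcJA]

lemma jb_le_two_of_le_one (r : ℝ) (hr : r ≤ 1) (hr0 : 0 ≤ r) : jb r ≤ 2 := by
  rw [jb, show (2:ℝ) = Real.sqrt 4 by
    rw [show (4:ℝ) = 2 ^ 2 by norm_num, Real.sqrt_sq]; norm_num]
  exact Real.sqrt_le_sqrt (by nlinarith)

/-- Pointwise semilinear null-form estimate: if `S^{αβ}` satisfies the null condition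
relative to the speed `c`, then on the region `r ≥ ct/2`, `t ≥ 0`,
`|S^{αβ} ∂_α u ∂_β v| ≤ (C/⟨r⟩)(|Γu||∂v| + |∂u||Γv| + ⟨ct-r⟩|∂u||∂v|)`. -/
theorem stmt_8 (c : ℝ) (hc : 0 < c) (S : Fin 4 → Fin 4 → ℝ)
    (hnull : ∀ ξ : Fin 4 → ℝ, ξ 0 ^ 2 = c ^ 2 * ∑ i : Fin 3, (ξ i.succ) ^ 2 →
      ∑ α : Fin 4, ∑ β : Fin 4, S α β * ξ α * ξ β = 0) :
    ∃ C : ℝ, 0 < C ∧ ∀ u v : (Fin 4 → ℝ) → ℝ, ContDiff ℝ 1 u → ContDiff ℝ 1 v →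
      ∀ y : Fin 4 → ℝ, 0 ≤ y 0 → c * y 0 / 2 ≤ spr y →
        |∑ α : Fin 4, ∑ β : Fin 4, S α β * pd α u y * pd β v y| ≤
          C / jb (spr y) *
            (gammaAbs u y * dAbs v y + dAbs u y * gammaAbs v y +
              jb (c * y 0 - spr y) * dAbs u y * dAbs v y) := by
  set M := ∑ α : Fin 4, ∑ β : Fin 4, |S α β| with hMdef
  have hMnn : 0 ≤ M :=
    Finset.sum_nonneg fun α _ => Finset.sum_nonneg fun β _ => abs_nonneg _
  refine ⟨36 * (M + 1) * (c + 1) ^ 2, by positivity, ?_⟩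
  intro u v _ _ y ht hrge
  have hc1 : (0:ℝ) ≤ c + 1 := by linarith
  set au := dAbs u y with haudef
  set av := dAbs v y with havdef
  set gu := gammaAbs u y with hgudef
  set gv := gammaAbs v y with hgvdef
  set J := jb (c * y 0 - spr y) with hJdef
  have hrnn : 0 ≤ spr y := Real.sqrt_nonneg _
  have hx : ∑ i : Fin 3, (y i.succ) ^ 2 = spr y ^ 2 :=
    (Real.sq_sqrt (Finset.sum_nonneg fun i _ => sq_nonneg _)).symm
  have hau : 0 ≤ au := Finset.sum_nonneg fun α _ => abs_nonneg _
  have hav : 0 ≤ av := Finset.sum_nonneg fun α _ => abs_nonneg _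
  have hrotu : 0 ≤ ∑ i : Fin 3, ∑ j : Fin 3, if i < j then |rotVF i j u y| else 0 :=
    Finset.sum_nonneg fun i _ => Finset.sum_nonneg fun j _ => by positivity
  have hrotv : 0 ≤ ∑ i : Fin 3, ∑ j : Fin 3, if i < j then |rotVF i j v y| else 0 :=
    Finset.sum_nonneg fun i _ => Finset.sum_nonneg fun j _ => by positivity
  have hgu_eq : gu = au + (∑ i : Fin 3, ∑ j : Fin 3, if i < j then |rotVF i j u y| else 0)
      + |scalingVF u y| := rfl
  have hgv_eq : gv = av + (∑ i : Fin 3, ∑ j : Fin 3, if i < j then |rotVF i j v y| else 0)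
      + |scalingVF v y| := rfl
  have hgu : 0 ≤ gu := by rw [hgu_eq]; positivity
  have hgv : 0 ≤ gv := by rw [hgv_eq]; positivity
  have hJ1 : 1 ≤ J := one_le_jb _
  have hGAu : au ≤ gu := by rw [hgu_eq]; have := abs_nonneg (scalingVF u y); linarith
  have hGAv : av ≤ gv := by rw [hgv_eq]; have := abs_nonneg (scalingVF v y); linarith
  have hsingle_u : ∀ α, |pd α u y| ≤ au := fun α =>
    Finset.single_le_sum (f := fun α => |pd α u y|) (fun β _ => abs_nonneg _)
      (Finset.mem_univ α)
  have hsingle_v : ∀ α, |pd α v y| ≤ av := fun α =>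
    Finset.single_le_sum (f := fun α => |pd α v y|) (fun β _ => abs_nonneg _)
      (Finset.mem_univ α)
  have hBIGnn : 0 ≤ gu * av + au * gv + J * au * av := by
    have h1 : 0 ≤ J * au * av := by
      have : (0:ℝ) ≤ J := by linarith
      positivity
    have h2 : 0 ≤ gu * av := mul_nonneg hgu hav
    have h3 : 0 ≤ au * gv := mul_nonneg hau hgv
    linarith
  clear_value M au av gu gv J
  rw [div_mul_eq_mul_div, le_div_iff₀ (jb_pos _)]
  rcases le_or_gt (spr y) 1 with hsmall | hbig
  · -- small r : trivial estimate
    have hE : ∀ α β, |pd α u y * pd β v y| ≤ au * av := fun α β => by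
      rw [abs_mul]
      exact mul_le_mul (hsingle_u α) (hsingle_v β) (abs_nonneg _) hau
    have hX : |∑ α : Fin 4, ∑ β : Fin 4, S α β * pd α u y * pd β v y| ≤ M * (au * av) := by
      have heq : ∑ α : Fin 4, ∑ β : Fin 4, S α β * pd α u y * pd β v y
          = ∑ α : Fin 4, ∑ β : Fin 4, S α β * (pd α u y * pd β v y) := by
        refine Finset.sum_congr rfl fun α _ => Finset.sum_congr rfl fun β _ => ?_
        ring
      rw [heq, hMdef]
      exact absSum2 S _ hE
    have hjb : jb (spr y) ≤ 2 := jb_le_two_of_le_one _ hsmall hrnn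
    have hMau : 0 ≤ M * (au * av) := mul_nonneg hMnn (mul_nonneg hau hav)
    calc |∑ α : Fin 4, ∑ β : Fin 4, S α β * pd α u y * pd β v y| * jb (spr y)
        ≤ M * (au * av) * 2 :=
          mul_le_mul hX hjb (jb_pos _).le hMau
      _ = 2 * M * (au * av) := by ring
      _ ≤ 36 * (M + 1) * (c + 1) ^ 2 * (J * (au * av)) := by
          have h2M : 2 * M ≤ 36 * (M + 1) * (c + 1) ^ 2 := by
            nlinarith [mul_nonneg hMnn hc.le, mul_nonneg (mul_nonneg hMnn hc.le) hc.le,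
              mul_nonneg hc.le hc.le]
          have hauav : au * av ≤ J * (au * av) := by
            nlinarith [mul_nonneg hau hav]
          have hJauav : 0 ≤ J * (au * av) := by nlinarith [mul_nonneg hau hav]
          calc 2 * M * (au * av) ≤ 2 * M * (J * (au * av)) := by
                refine mul_le_mul_of_nonneg_left hauav (by linarith)
            _ ≤ 36 * (M + 1) * (c + 1) ^ 2 * (J * (au * av)) :=
                mul_le_mul_of_nonneg_right h2M hJauav
      _ ≤ 36 * (M + 1) * (c + 1) ^ 2 * (gu * av + au * gv + J * au * av) := by
          have hstep : 0 ≤ 36 * (M + 1) * (c + 1) ^ 2 * (gu * av + au * gv) :=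
            mul_nonneg (by positivity)
              (add_nonneg (mul_nonneg hgu hav) (mul_nonneg hau hgv))
          nlinarith [hstep]
  · -- main case : r ≥ 1
    have hr1 : 1 ≤ spr y := hbig.le
    have hlt : c * y 0 ≤ 2 * spr y := by linarith
    set m := mv c (fun i => y i.succ) (spr y) with hmdef
    set Dp := ∑ i : Fin 3, y i.succ / spr y * pd i.succ u y with hDpdef
    set Dq := ∑ i : Fin 3, y i.succ / spr y * pd i.succ v y with hDqdef
    have hrpos : (0:ℝ) < spr y := lt_of_lt_of_le one_pos hr1
    -- null vector
    have hm0 : m 0 ^ 2 = c ^ 2 * ∑ i : Fin 3, (m i.succ) ^ 2 := by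
      have hsum : ∑ i : Fin 3, (m i.succ) ^ 2 = 1 := by
        have : ∀ i : Fin 3, (m i.succ) ^ 2 = (y i.succ) ^ 2 / spr y ^ 2 := by
          intro i
          rw [hmdef, mv, Fin.cons_succ]
          rw [div_pow]
        rw [Finset.sum_congr rfl fun i _ => this i, ← Finset.sum_div, hx]
        field_simp
      rw [hsum, hmdef, mv, Fin.cons_zero]
      ring
    have h0 := hnull m hm0
    have key := null_decomp S m (fun α => pd α u y) (fun β => pd β v y) Dp Dq h0
    -- bounds
    have hxr : ∀ i : Fin 3, |y i.succ| ≤ spr y := by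
      intro i
      have h1 : (y i.succ) ^ 2 ≤ spr y ^ 2 := by
        rw [← hx]
        exact Finset.single_le_sum (f := fun i => (y i.succ) ^ 2)
          (fun j _ => sq_nonneg _) (Finset.mem_univ i)
      nlinarith [abs_nonneg (y i.succ), sq_abs (y i.succ)]
    have hmb : ∀ β, |m β| ≤ c + 1 := by
      intro β
      induction β using Fin.cases with
      | zero =>
          rw [hmdef, mv, Fin.cons_zero, abs_neg, abs_of_pos hc]; linarith
      | succ i =>
          rw [hmdef, mv, Fin.cons_succ, abs_div, abs_of_pos hrpos, div_le_iff₀ hrpos]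
          linarith [hxr i, mul_nonneg hc.le hrpos.le]
    have hDle : ∀ (w : (Fin 4 → ℝ) → ℝ) (A : ℝ), A = dAbs w y →
        |∑ i : Fin 3, y i.succ / spr y * pd i.succ w y| ≤ A := by
      intro w A hA
      have hsplit : dAbs w y = |pd 0 w y| + ∑ i : Fin 3, |pd i.succ w y| :=
        Fin.sum_univ_succ _
      calc |∑ i : Fin 3, y i.succ / spr y * pd i.succ w y|
          ≤ ∑ i : Fin 3, |y i.succ / spr y * pd i.succ w y| :=
            Finset.abs_sum_le_sum_abs _ _
        _ ≤ ∑ i : Fin 3, |pd i.succ w y| := by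
            refine Finset.sum_le_sum fun i _ => ?_
            rw [abs_mul]
            refine mul_le_of_le_one_left (abs_nonneg _) ?_
            rw [abs_div, abs_of_pos hrpos, div_le_one hrpos]
            exact hxr i
        _ ≤ A := by
            rw [hA, hsplit]
            have := abs_nonneg (pd 0 w y); linarith
    have hDp' : |Dp| ≤ au := hDle u au haudef
    have hDq' : |Dq| ≤ av := hDle v av havdef
    -- gradBound hypotheses for u and v
    have hsv : ∀ w : (Fin 4 → ℝ) → ℝ,
        scalingVF w y = y 0 * pd 0 w y + ∑ i : Fin 3, y i.succ * pd i.succ w y := by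
      intro w
      simp only [scalingVF]
      exact Fin.sum_univ_succ _
    have hG1u : |y 0 * pd 0 u y + ∑ i : Fin 3, y i.succ * pd i.succ u y| ≤ gu := by
      rw [← hsv u, hgu_eq]; linarith [hau, hrotu]
    have hG1v : |y 0 * pd 0 v y + ∑ i : Fin 3, y i.succ * pd i.succ v y| ≤ gv := by
      rw [← hsv v, hgv_eq]; linarith [hav, hrotv]
    have hG2u : (∑ a : Fin 3, ∑ b : Fin 3,
        if a < b then |y a.succ * pd b.succ u y - y b.succ * pd a.succ u y| else 0) ≤ gu := by
      have : (∑ a : Fin 3, ∑ b : Fin 3,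
          if a < b then |y a.succ * pd b.succ u y - y b.succ * pd a.succ u y| else 0)
          = ∑ i : Fin 3, ∑ j : Fin 3, if i < j then |rotVF i j u y| else 0 := rfl
      rw [this, hgu_eq]; have := abs_nonneg (scalingVF u y); linarith
    have hG2v : (∑ a : Fin 3, ∑ b : Fin 3,
        if a < b then |y a.succ * pd b.succ v y - y b.succ * pd a.succ v y| else 0) ≤ gv := by
      have : (∑ a : Fin 3, ∑ b : Fin 3,
          if a < b then |y a.succ * pd b.succ v y - y b.succ * pd a.succ v y| else 0)
          = ∑ i : Fin 3, ∑ j : Fin 3, if i < j then |rotVF i j v y| else 0 := rfl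
      rw [this, hgv_eq]; have := abs_nonneg (scalingVF v y); linarith
    have hPu : ∀ α, jb (spr y) * |pd α u y - m α * Dp| ≤ 6 * (c+1) * (gu + J * au) := by
      intro α
      rw [hJdef]
      exact gradBound c (spr y) (y 0) (fun α => pd α u y) (fun i => y i.succ) gu au
        hc hr1 ht hx hlt haudef hG1u hG2u hGAu α
    have hPv : ∀ α, jb (spr y) * |pd α v y - m α * Dq| ≤ 6 * (c+1) * (gv + J * av) := by
      intro α
      rw [hJdef]
      exact gradBound c (spr y) (y 0) (fun α => pd α v y) (fun i => y i.succ) gv av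
        hc hr1 ht hx hlt havdef hG1v hG2v hGAv α
    set PB := 6 * (c+1) * (gu + J * au) with hPBdef
    set QB := 6 * (c+1) * (gv + J * av) with hQBdef
    have hPBnn : 0 ≤ PB := by
      have : 0 ≤ J * au := mul_nonneg (by linarith) hau
      rw [hPBdef]; nlinarith
    have hQBnn : 0 ≤ QB := by
      have : 0 ≤ J * av := mul_nonneg (by linarith) hav
      rw [hQBdef]; nlinarith
    have hPle : ∀ α, |pd α u y - m α * Dp| ≤ PB / jb (spr y) := fun α => by
      rw [le_div_iff₀ (jb_pos _), mul_comm]; exact hPu α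
    have hQle : ∀ β, |pd β v y - m β * Dq| ≤ QB / jb (spr y) := fun β => by
      rw [le_div_iff₀ (jb_pos _), mul_comm]; exact hPv β
    clear_value m Dp Dq PB QB
    have hQtriv : ∀ β, |pd β v y - m β * Dq| ≤ (c + 2) * av := by
      intro β
      calc |pd β v y - m β * Dq| ≤ |pd β v y| + |m β * Dq| := abs_sub _ _
        _ ≤ av + (c+1) * av := by
            rw [abs_mul]
            have h1 := mul_le_mul (hmb β) hDq' (abs_nonneg _) hc1
            linarith [hsingle_v β]
        _ = (c + 2) * av := by ring
    have hPBdnn : 0 ≤ PB / jb (spr y) := div_nonneg hPBnn (jb_pos _).le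
    set B := (c+1) * au * (QB / jb (spr y)) + (PB / jb (spr y)) * ((c+1) * av)
        + (PB / jb (spr y)) * ((c+2) * av) with hBdef
    clear_value B
    have hE : ∀ α β, |m α * Dp * (pd β v y - m β * Dq)
        + (pd α u y - m α * Dp) * (m β * Dq)
        + (pd α u y - m α * Dp) * (pd β v y - m β * Dq)| ≤ B := by
      intro α β
      have t1 : |m α * Dp * (pd β v y - m β * Dq)| ≤ (c+1) * au * (QB / jb (spr y)) := by
        rw [abs_mul, abs_mul]
        refine mul_le_mul (mul_le_mul (hmb α) hDp' (abs_nonneg _) hc1) (hQle β)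
          (abs_nonneg _) (mul_nonneg hc1 hau)
      have t2 : |(pd α u y - m α * Dp) * (m β * Dq)| ≤ (PB / jb (spr y)) * ((c+1) * av) := by
        rw [abs_mul, abs_mul]
        refine mul_le_mul (hPle α) (mul_le_mul (hmb β) hDq' (abs_nonneg _) hc1)
          (mul_nonneg (abs_nonneg _) (abs_nonneg _)) hPBdnn
      have t3 : |(pd α u y - m α * Dp) * (pd β v y - m β * Dq)|
          ≤ (PB / jb (spr y)) * ((c+2) * av) := by
        rw [abs_mul]
        exact mul_le_mul (hPle α) (hQtriv β) (abs_nonneg _) hPBdnn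
      calc |m α * Dp * (pd β v y - m β * Dq) + (pd α u y - m α * Dp) * (m β * Dq)
            + (pd α u y - m α * Dp) * (pd β v y - m β * Dq)|
          ≤ |m α * Dp * (pd β v y - m β * Dq)| + |(pd α u y - m α * Dp) * (m β * Dq)|
            + |(pd α u y - m α * Dp) * (pd β v y - m β * Dq)| := abs_add_three _ _ _
        _ ≤ B := by rw [hBdef]; linarith
    have hX : |∑ α : Fin 4, ∑ β : Fin 4, S α β * (m α * Dp * (pd β v y - m β * Dq)
        + (pd α u y - m α * Dp) * (m β * Dq)
        + (pd α u y - m α * Dp) * (pd β v y - m β * Dq))| ≤ M * B := by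
      rw [hMdef]
      exact absSum2 S _ hE
    have hBj : B * jb (spr y) = (c+1) * au * QB + PB * ((c+1) * av) + PB * ((c+2) * av) := by
      rw [hBdef]
      field_simp
      rw [mul_div_cancel_left₀ _ (jb_pos (spr y)).ne']
    have hN : (c+1) * au * QB + PB * ((c+1) * av) + PB * ((c+2) * av)
        ≤ 36 * (c+1)^2 * (gu * av + au * gv + J * au * av) := by
      rw [hPBdef, hQBdef]
      have hJnn : (0:ℝ) ≤ J := by linarith
      have h1 : 0 ≤ (c+1)^2 * (au * gv) := mul_nonneg (sq_nonneg _) (mul_nonneg hau hgv)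
      have h2 : 0 ≤ c * (c+1) * (gu * av) :=
        mul_nonneg (mul_nonneg hc.le hc1) (mul_nonneg hgu hav)
      have h3 : 0 ≤ (c+1) * (gu * av) := mul_nonneg hc1 (mul_nonneg hgu hav)
      have h4 : 0 ≤ c * (c+1) * (J * (au * av)) :=
        mul_nonneg (mul_nonneg hc.le hc1) (mul_nonneg hJnn (mul_nonneg hau hav))
      have h5 : 0 ≤ (c+1) * (J * (au * av)) :=
        mul_nonneg hc1 (mul_nonneg hJnn (mul_nonneg hau hav))
      linarith only [h1, h2, h3, h4, h5]
    calc |∑ α : Fin 4, ∑ β : Fin 4, S α β * pd α u y * pd β v y| * jb (spr y)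
        = |∑ α : Fin 4, ∑ β : Fin 4, S α β * (m α * Dp * (pd β v y - m β * Dq)
            + (pd α u y - m α * Dp) * (m β * Dq)
            + (pd α u y - m α * Dp) * (pd β v y - m β * Dq))| * jb (spr y) := by
          rw [key]
      _ ≤ (M * B) * jb (spr y) := mul_le_mul_of_nonneg_right hX (jb_pos _).le
      _ = M * (B * jb (spr y)) := by ring
      _ = M * ((c+1) * au * QB + PB * ((c+1) * av) + PB * ((c+2) * av)) := by rw [hBj]
      _ ≤ M * (36 * (c+1)^2 * (gu * av + au * gv + J * au * av)) :=
          mul_le_mul_of_nonneg_left hN hMnn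
      _ ≤ 36 * (M + 1) * (c + 1) ^ 2 * (gu * av + au * gv + J * au * av) := by
          linarith only [mul_nonneg (sq_nonneg (c+1)) hBIGnn]
end
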